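/- arXiv:1304.2444 — 2 statements merged into one kernel-verified Lean document; each statement's English description precedes it below -/
import Mathlib

section
/- For binary X, Y with I(X ∧ Y) ≠ 0 and interactive random variables U^r satisfying conditions (P1)-(P2), if for a positive-probability realization u^r we have P(X=0|U^r=u^r)·P(X=1|U^r=u^r) > 0 and P(Y=0|U^r=u^r)·P(Y=1|U^r=u^r) > 0, then I(X ∧ Y | U^{r-1} = u^{r-1}) = 0. -/
open scoped Classical
open Finset Real

noncomputable section

variable {Ω : Type*} [Fintype Ω]

/-- Pushforward probability of value `x` under random variable `X` w.r.t. pmf `p`. -/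
def dist' {α : Type*} (p : Ω → ℝ) (X : Ω → α) (x : α) : ℝ :=
  ∑ ω, if X ω = x then p ω else 0

/-- Shannon entropy, base 2. -/
def ent {α : Type*} [Fintype α] (p : Ω → ℝ) (X : Ω → α) : ℝ :=
  -∑ x, dist' p X x * Real.logb 2 (dist' p X x)

/-- Conditional entropy `H(X | Y)`. -/
def condEnt {α β : Type*} [Fintype α] [Fintype β] (p : Ω → ℝ) (X : Ω → α) (Y : Ω → β) : ℝ :=
  ent p (fun ω => (X ω, Y ω)) - ent p Y

/-- Mutual information `I(X ∧ Y)`. -/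
def mi {α β : Type*} [Fintype α] [Fintype β] (p : Ω → ℝ) (X : Ω → α) (Y : Ω → β) : ℝ :=
  ent p X + ent p Y - ent p (fun ω => (X ω, Y ω))

/-- Conditional mutual information `I(X ∧ Y | Z)`. -/
def cmi {α β γ : Type*} [Fintype α] [Fintype β] [Fintype γ]
    (p : Ω → ℝ) (X : Ω → α) (Y : Ω → β) (Z : Ω → γ) : ℝ :=
  ent p (fun ω => (X ω, Z ω)) + ent p (fun ω => (Y ω, Z ω))
    - ent p (fun ω => ((X ω, Y ω), Z ω)) - ent p Z

/-- `p` is a probability mass function on `Ω`. -/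
def IsPMF (p : Ω → ℝ) : Prop := (∀ ω, 0 ≤ p ω) ∧ ∑ ω, p ω = 1

/-- The prefix `U^i = (U_1, ..., U_i)` of an interactive sequence. -/
def pre {𝒰 : Type*} {r : ℕ} (U : Fin r → Ω → 𝒰) (i : ℕ) (h : i ≤ r) :
    Ω → (Fin i → 𝒰) :=
  fun ω k => U (Fin.castLE h k) ω

/-- Condition (P1): interactive Markov conditions.  Index `j : Fin r` corresponds to the
`(j+1)`-st message; messages with odd 1-based index (`Even j.val`) are sent by terminal 𝒳. -/
def P1cond {𝒳 𝒴 𝒰 : Type*} [Fintype 𝒳] [Fintype 𝒴] [Fintype 𝒰] {r : ℕ}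
    (p : Ω → ℝ) (X : Ω → 𝒳) (Y : Ω → 𝒴) (U : Fin r → Ω → 𝒰) : Prop :=
  ∀ j : Fin r,
    (Even j.val → cmi p (U j) Y (fun ω => (X ω, pre U j.val j.isLt.le ω)) = 0) ∧
    (¬ Even j.val → cmi p (U j) X (fun ω => (Y ω, pre U j.val j.isLt.le ω)) = 0)

/-- Condition (P2): `X -∘- U^r -∘- Y`. -/
def P2cond {𝒳 𝒴 𝒰 : Type*} [Fintype 𝒳] [Fintype 𝒴] [Fintype 𝒰] {r : ℕ}
    (p : Ω → ℝ) (X : Ω → 𝒳) (Y : Ω → 𝒴) (U : Fin r → Ω → 𝒰) : Prop :=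
  cmi p X Y (pre U r le_rfl) = 0

/-- The conditional pmf on `Ω` given the event `A = u`. -/
def condPMF {α : Type*} (p : Ω → ℝ) (A : Ω → α) (u : α) : Ω → ℝ :=
  fun ω => if A ω = u then p ω / dist' p A u else 0

section Aux

variable {Ω : Type*} [Fintype Ω]

/-- Sum of `p` over the set where `P` holds. -/
def S (p : Ω → ℝ) (P : Ω → Prop) : ℝ := ∑ ω, if P ω then p ω else 0

lemma S_nonneg (p : Ω → ℝ) (hp : ∀ ω, 0 ≤ p ω) (P : Ω → Prop) : 0 ≤ S p P :=
  Finset.sum_nonneg fun ω _ => by split <;> simp [hp ω]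

lemma S_congr (p : Ω → ℝ) {P Q : Ω → Prop} (h : ∀ ω, P ω ↔ Q ω) : S p P = S p Q :=
  Finset.sum_congr rfl fun ω _ => by rw [if_congr (h ω) rfl rfl]

lemma S_mono (p : Ω → ℝ) (hp : ∀ ω, 0 ≤ p ω) {P Q : Ω → Prop}
    (h : ∀ ω, P ω → Q ω) : S p P ≤ S p Q := by
  refine Finset.sum_le_sum fun ω _ => ?_
  by_cases hP : P ω
  · rw [if_pos hP, if_pos (h ω hP)]
  · rw [if_neg hP]; split <;> simp [hp ω]

lemma S_fiber {β : Type*} [Fintype β] (p : Ω → ℝ) (P : Ω → Prop) (f : Ω → β) :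
    ∑ b, S p (fun ω => P ω ∧ f ω = b) = S p P := by
  unfold S; rw [Finset.sum_comm]
  refine Finset.sum_congr rfl fun ω _ => ?_
  by_cases hP : P ω <;> simp [hP]

lemma dist'_S {α : Type*} (p : Ω → ℝ) (A : Ω → α) (x : α) :
    dist' p A x = S p (fun ω => A ω = x) := rfl

lemma S_univ (p : Ω → ℝ) : S p (fun _ => True) = ∑ ω, p ω := by simp [S]

lemma dist'_condPMF {α β : Type*} (p : Ω → ℝ) (A : Ω → α) (u : α) (Z : Ω → β) (z : β) :
    dist' (condPMF p A u) Z z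
      = S p (fun ω => Z ω = z ∧ A ω = u) / dist' p A u := by
  unfold dist' condPMF S
  rw [Finset.sum_div]
  refine Finset.sum_congr rfl fun ω _ => ?_
  by_cases h1 : Z ω = z <;> by_cases h2 : A ω = u <;> simp [h1, h2, dist']

lemma condPMF_isPMF {α : Type*} (p : Ω → ℝ) (hp : ∀ ω, 0 ≤ p ω) (A : Ω → α) (u : α)
    (hu : 0 < dist' p A u) : IsPMF (condPMF p A u) := by
  constructor
  · intro ω; unfold condPMF; split
    · exact div_nonneg (hp ω) hu.le
    · exact le_refl 0
  · unfold condPMF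
    have : ∑ ω, (if A ω = u then p ω / dist' p A u else 0)
        = (∑ ω, if A ω = u then p ω else 0) / dist' p A u := by
      rw [Finset.sum_div]
      refine Finset.sum_congr rfl fun ω _ => ?_
      split <;> simp
    rw [this]
    exact div_self hu.ne'

end Aux
section CoreLemma

variable {Ω : Type*} [Fintype Ω]

lemma cmi_zero_imp {α β γ : Type*} [Fintype α] [Fintype β] [Fintype γ]
    (p : Ω → ℝ) (hp : IsPMF p) (A : Ω → α) (B : Ω → β) (C : Ω → γ)
    (h : cmi p A B C = 0) (a₀ : α) (b₀ : β) (c₀ : γ) :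
    dist' p (fun ω => ((A ω, B ω), C ω)) ((a₀, b₀), c₀) * dist' p C c₀
      = dist' p (fun ω => (A ω, C ω)) (a₀, c₀) * dist' p (fun ω => (B ω, C ω)) (b₀, c₀) := by
  obtain ⟨hp0, hp1⟩ := hp
  set T : α → β → γ → ℝ :=
    fun a b c => dist' p (fun ω => ((A ω, B ω), C ω)) ((a, b), c) with hT
  have hT0 : ∀ a b c, 0 ≤ T a b c := fun a b c => S_nonneg p hp0 _
  have hTS : ∀ a b c, T a b c = S p (fun ω => A ω = a ∧ B ω = b ∧ C ω = c) := by
    intro a b c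
    show dist' p _ _ = _
    rw [dist'_S]
    exact S_congr p fun ω => by simp [Prod.ext_iff]; tauto
  -- marginals
  have hMAC : ∀ a c, dist' p (fun ω => (A ω, C ω)) (a, c) = ∑ b, T a b c := by
    intro a c
    have h1 : dist' p (fun ω => (A ω, C ω)) (a, c)
        = S p (fun ω => A ω = a ∧ C ω = c) := S_congr p fun ω => by simp [Prod.ext_iff]
    rw [h1, ← S_fiber p (fun ω => A ω = a ∧ C ω = c) B]
    exact Finset.sum_congr rfl fun b _ => by
      rw [hTS]; exact S_congr p fun ω => by tauto
  have hMBC : ∀ b c, dist' p (fun ω => (B ω, C ω)) (b, c) = ∑ a, T a b c := by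
    intro b c
    have h1 : dist' p (fun ω => (B ω, C ω)) (b, c)
        = S p (fun ω => B ω = b ∧ C ω = c) := S_congr p fun ω => by simp [Prod.ext_iff]
    rw [h1, ← S_fiber p (fun ω => B ω = b ∧ C ω = c) A]
    exact Finset.sum_congr rfl fun a _ => by
      rw [hTS]; exact S_congr p fun ω => by tauto
  have hMC : ∀ c, dist' p C c = ∑ a, ∑ b, T a b c := by
    intro c
    have h1 : dist' p C c = S p (fun ω => C ω = c) := rfl
    rw [h1, ← S_fiber p (fun ω => C ω = c) A]
    refine Finset.sum_congr rfl fun a _ => ?_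
    rw [← S_fiber p (fun ω => C ω = c ∧ A ω = a) B]
    exact Finset.sum_congr rfl fun b _ => by
      rw [hTS]; exact S_congr p fun ω => by tauto
  have hsum : ∑ c, ∑ a, ∑ b, T a b c = 1 := by
    rw [← hp1, ← S_univ p, ← S_fiber p (fun _ => True) C]
    refine Finset.sum_congr rfl fun c _ => ?_
    rw [← hMC c]
    exact (S_congr p fun ω => by simp).symm

  -- abbreviations for marginals
  set MACf : α → γ → ℝ := fun a c => ∑ b, T a b c with hMACf
  set MBCf : β → γ → ℝ := fun b c => ∑ a, T a b c with hMBCf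
  set MCf : γ → ℝ := fun c => ∑ a, ∑ b, T a b c with hMCf
  have hMAC0 : ∀ a c, 0 ≤ MACf a c := fun a c => Finset.sum_nonneg fun b _ => hT0 a b c
  have hMBC0 : ∀ b c, 0 ≤ MBCf b c := fun b c => Finset.sum_nonneg fun a _ => hT0 a b c
  have hMC0 : ∀ c, 0 ≤ MCf c :=
    fun c => Finset.sum_nonneg fun a _ => Finset.sum_nonneg fun b _ => hT0 a b c
  have hTleMAC : ∀ a b c, T a b c ≤ MACf a c := fun a b c =>
    Finset.single_le_sum (fun b _ => hT0 a b c) (Finset.mem_univ b)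
  have hTleMBC : ∀ a b c, T a b c ≤ MBCf b c := fun a b c =>
    Finset.single_le_sum (fun a _ => hT0 a b c) (Finset.mem_univ a)
  have hMACleMC : ∀ a c, MACf a c ≤ MCf c := fun a c =>
    Finset.single_le_sum (fun a _ => Finset.sum_nonneg fun b _ => hT0 a b c) (Finset.mem_univ a)
  have hMBCleMC : ∀ b c, MBCf b c ≤ MCf c := by
    intro b c
    have h1 : MCf c = ∑ b, ∑ a, T a b c := Finset.sum_comm
    rw [h1]
    exact Finset.single_le_sum (fun b _ => Finset.sum_nonneg fun a _ => hT0 a b c)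
      (Finset.mem_univ b)
  have hTleMC : ∀ a b c, T a b c ≤ MCf c := fun a b c =>
    le_trans (hTleMAC a b c) (hMACleMC a c)
  -- entropy identities
  have S1 : ent p (fun ω => ((A ω, B ω), C ω))
      = -∑ a, ∑ b, ∑ c, T a b c * Real.logb 2 (T a b c) := by
    rw [ent, Fintype.sum_prod_type, Fintype.sum_prod_type]
  have S2 : ent p (fun ω => (A ω, C ω))
      = -∑ a, ∑ b, ∑ c, T a b c * Real.logb 2 (MACf a c) := by
    rw [ent, Fintype.sum_prod_type]
    congr 1
    refine Finset.sum_congr rfl fun a _ => ?_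
    calc ∑ c, dist' p (fun ω => (A ω, C ω)) (a, c)
            * Real.logb 2 (dist' p (fun ω => (A ω, C ω)) (a, c))
        = ∑ c, ∑ b, T a b c * Real.logb 2 (MACf a c) := by
          refine Finset.sum_congr rfl fun c _ => ?_
          rw [hMAC a c, Finset.sum_mul]
      _ = ∑ b, ∑ c, T a b c * Real.logb 2 (MACf a c) := Finset.sum_comm
  have S3 : ent p (fun ω => (B ω, C ω))
      = -∑ a, ∑ b, ∑ c, T a b c * Real.logb 2 (MBCf b c) := by
    rw [ent, Fintype.sum_prod_type]
    congr 1
    calc ∑ b, ∑ c, dist' p (fun ω => (B ω, C ω)) (b, c)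
            * Real.logb 2 (dist' p (fun ω => (B ω, C ω)) (b, c))
        = ∑ b, ∑ c, ∑ a, T a b c * Real.logb 2 (MBCf b c) := by
          refine Finset.sum_congr rfl fun b _ => Finset.sum_congr rfl fun c _ => ?_
          rw [hMBC b c, Finset.sum_mul]
      _ = ∑ b, ∑ a, ∑ c, T a b c * Real.logb 2 (MBCf b c) :=
          Finset.sum_congr rfl fun b _ => Finset.sum_comm
      _ = ∑ a, ∑ b, ∑ c, T a b c * Real.logb 2 (MBCf b c) := Finset.sum_comm
  have S4 : ent p C = -∑ a, ∑ b, ∑ c, T a b c * Real.logb 2 (MCf c) := by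
    rw [ent]
    congr 1
    calc ∑ c, dist' p C c * Real.logb 2 (dist' p C c)
        = ∑ c, ∑ a, ∑ b, T a b c * Real.logb 2 (MCf c) := by
          refine Finset.sum_congr rfl fun c _ => ?_
          rw [hMC c, Finset.sum_mul]
          exact Finset.sum_congr rfl fun a _ => Finset.sum_mul _ _ _
      _ = ∑ a, ∑ c, ∑ b, T a b c * Real.logb 2 (MCf c) := Finset.sum_comm
      _ = ∑ a, ∑ b, ∑ c, T a b c * Real.logb 2 (MCf c) :=
          Finset.sum_congr rfl fun a _ => Finset.sum_comm
  -- cmi as a single triple sum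
  set D : α → β → γ → ℝ := fun a b c =>
    T a b c * (Real.logb 2 (T a b c) + Real.logb 2 (MCf c)
      - Real.logb 2 (MACf a c) - Real.logb 2 (MBCf b c)) with hD
  have key : ∑ a, ∑ b, ∑ c, D a b c = 0 := by
    have expand : ∑ a, ∑ b, ∑ c, D a b c
        = (∑ a, ∑ b, ∑ c, T a b c * Real.logb 2 (T a b c))
          + (∑ a, ∑ b, ∑ c, T a b c * Real.logb 2 (MCf c))
          - (∑ a, ∑ b, ∑ c, T a b c * Real.logb 2 (MACf a c))
          - (∑ a, ∑ b, ∑ c, T a b c * Real.logb 2 (MBCf b c)) := by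
      simp only [hD, mul_add, mul_sub, Finset.sum_add_distrib, Finset.sum_sub_distrib]
    have hc := h
    rw [cmi, S1, S2, S3, S4] at hc
    rw [expand]
    linarith
  -- the comparison distribution
  set Q : α → β → γ → ℝ := fun a b c => MACf a c * MBCf b c / MCf c with hQ
  have hQ0 : ∀ a b c, 0 ≤ Q a b c := fun a b c =>
    div_nonneg (mul_nonneg (hMAC0 a c) (hMBC0 b c)) (hMC0 c)
  have hsum' : ∑ a, ∑ b, ∑ c, T a b c = 1 := by
    rw [← hsum]
    calc ∑ a, ∑ b, ∑ c, T a b c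
        = ∑ a, ∑ c, ∑ b, T a b c := Finset.sum_congr rfl fun a _ => Finset.sum_comm
      _ = ∑ c, ∑ a, ∑ b, T a b c := Finset.sum_comm
  have hQsum : ∑ a, ∑ b, ∑ c, Q a b c = 1 := by
    have hstep : ∀ b c, ∑ a, Q a b c = MBCf b c := by
      intro b c
      by_cases hc : MCf c = 0
      · have hz : ∀ a, Q a b c = 0 := fun a => by rw [hQ]; simp [hc]
        have hz2 : MBCf b c = 0 :=
          le_antisymm (hc ▸ hMBCleMC b c) (hMBC0 b c)
        simp [hz, hz2]
      · have h2 : ∑ a, Q a b c = (∑ a, MACf a c) * MBCf b c / MCf c := by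
          simp only [hQ]
          rw [Finset.sum_mul, Finset.sum_div]
        rw [h2]
        have : (∑ a, MACf a c) = MCf c := rfl
        rw [this, mul_comm, mul_div_assoc, div_self hc, mul_one]
    calc ∑ a, ∑ b, ∑ c, Q a b c
        = ∑ a, ∑ c, ∑ b, Q a b c := Finset.sum_congr rfl fun a _ => Finset.sum_comm
      _ = ∑ c, ∑ a, ∑ b, Q a b c := Finset.sum_comm
      _ = ∑ c, ∑ b, ∑ a, Q a b c := Finset.sum_congr rfl fun c _ => Finset.sum_comm
      _ = ∑ c, ∑ b, MBCf b c := by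
          refine Finset.sum_congr rfl fun c _ => Finset.sum_congr rfl fun b _ => hstep b c
      _ = ∑ c, ∑ b, ∑ a, T a b c := rfl
      _ = ∑ c, ∑ a, ∑ b, T a b c := Finset.sum_congr rfl fun c _ => Finset.sum_comm
      _ = 1 := hsum
  set L2 : ℝ := Real.log 2 with hL2
  have hL2pos : 0 < L2 := Real.log_pos one_lt_two
  -- the log-form of D on the support
  have hDpos : ∀ a b c, 0 < T a b c →
      D a b c = T a b c * (Real.log (T a b c) - Real.log (Q a b c)) / L2 := by
    intro a b c ht
    have hmac : 0 < MACf a c := lt_of_lt_of_le ht (hTleMAC a b c)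
    have hmbc : 0 < MBCf b c := lt_of_lt_of_le ht (hTleMBC a b c)
    have hmc : 0 < MCf c := lt_of_lt_of_le ht (hTleMC a b c)
    have hlogQ : Real.log (Q a b c)
        = Real.log (MACf a c) + Real.log (MBCf b c) - Real.log (MCf c) := by
      rw [hQ]
      rw [Real.log_div (by positivity) hmc.ne', Real.log_mul hmac.ne' hmbc.ne']
    rw [hD]
    simp only [Real.logb, hL2]
    rw [hlogQ]
    ring
  have hQposOfT : ∀ a b c, 0 < T a b c → 0 < Q a b c := by
    intro a b c ht
    have hmac : 0 < MACf a c := lt_of_lt_of_le ht (hTleMAC a b c)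
    have hmbc : 0 < MBCf b c := lt_of_lt_of_le ht (hTleMBC a b c)
    have hmc : 0 < MCf c := lt_of_lt_of_le ht (hTleMC a b c)
    exact div_pos (mul_pos hmac hmbc) hmc
  -- pointwise lower bound
  have hpoint : ∀ a b c, (T a b c - Q a b c) / L2 ≤ D a b c := by
    intro a b c
    rcases eq_or_lt_of_le (hT0 a b c) with ht | ht
    · have hdz : D a b c = 0 := by rw [hD]; simp [← ht]
      rw [hdz]
      apply div_nonpos_of_nonpos_of_nonneg _ hL2pos.le
      have := hQ0 a b c
      linarith
    · rw [hDpos a b c ht, div_le_div_iff_of_pos_right hL2pos]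
      have hQpos := hQposOfT a b c ht
      have hlog := Real.log_le_sub_one_of_pos (div_pos hQpos ht)
      rw [Real.log_div hQpos.ne' ht.ne'] at hlog
      have h3 : T a b c * (Q a b c / T a b c - 1) = Q a b c - T a b c := by
        field_simp
      nlinarith [mul_le_mul_of_nonneg_left hlog ht.le]

  -- equality in the sum forces T = Q pointwise
  have hEnn : ∀ a b c, 0 ≤ D a b c - (T a b c - Q a b c) / L2 :=
    fun a b c => sub_nonneg.mpr (hpoint a b c)
  have hsumE : ∑ a, ∑ b, ∑ c, (D a b c - (T a b c - Q a b c) / L2) = 0 := by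
    simp only [sub_div, Finset.sum_sub_distrib, ← Finset.sum_div]
    rw [key, hsum', hQsum]
    ring
  have hEz : ∀ a b c, D a b c - (T a b c - Q a b c) / L2 = 0 := by
    intro a b c
    have h1 := (Finset.sum_eq_zero_iff_of_nonneg
      (fun a _ => Finset.sum_nonneg fun b _ => Finset.sum_nonneg fun c _ => hEnn a b c)).mp
      hsumE a (Finset.mem_univ a)
    have h2 := (Finset.sum_eq_zero_iff_of_nonneg
      (fun b _ => Finset.sum_nonneg fun c _ => hEnn a b c)).mp h1 b (Finset.mem_univ b)
    exact (Finset.sum_eq_zero_iff_of_nonneg (fun c _ => hEnn a b c)).mp h2 c (Finset.mem_univ c)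
  have hTQ : ∀ a b c, T a b c = Q a b c := by
    intro a b c
    have heq : D a b c = (T a b c - Q a b c) / L2 := by linarith [hEz a b c]
    rcases eq_or_lt_of_le (hT0 a b c) with ht | ht
    · have hdz : D a b c = 0 := by rw [hD]; simp [← ht]
      rw [hdz, ← ht] at heq
      have hq0 : Q a b c = 0 := by
        have h5 : (0 - Q a b c) / L2 = 0 := heq.symm
        rw [div_eq_zero_iff] at h5
        rcases h5 with h5 | h5
        · linarith
        · exact absurd h5 hL2pos.ne'
      rw [← ht, hq0]
    · by_contra hne
      have hQpos := hQposOfT a b c ht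
      have hxpos : 0 < Q a b c / T a b c := div_pos hQpos ht
      have hx1 : Q a b c / T a b c ≠ 1 := by
        intro hx
        rw [div_eq_one_iff_eq ht.ne'] at hx
        exact hne hx.symm
      have hlog := Real.log_lt_sub_one_of_pos hxpos hx1
      rw [Real.log_div hQpos.ne' ht.ne'] at hlog
      rw [hDpos a b c ht] at heq
      have heq2 : T a b c * (Real.log (T a b c) - Real.log (Q a b c))
          = T a b c - Q a b c := by
        field_simp at heq
        linarith
      have h3 : T a b c * (Q a b c / T a b c - 1) = Q a b c - T a b c := by
        field_simp
      nlinarith [mul_lt_mul_of_pos_left hlog ht]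
  -- conclude
  have hgoal : T a₀ b₀ c₀ * MCf c₀ = MACf a₀ c₀ * MBCf b₀ c₀ := by
    by_cases hc : MCf c₀ = 0
    · have ht0 : T a₀ b₀ c₀ = 0 := le_antisymm (hc ▸ hTleMC a₀ b₀ c₀) (hT0 a₀ b₀ c₀)
      have hmac0 : MACf a₀ c₀ = 0 := le_antisymm (hc ▸ hMACleMC a₀ c₀) (hMAC0 a₀ c₀)
      rw [ht0, hmac0]
      ring
    · rw [hTQ a₀ b₀ c₀]
      simp only [hQ]
      rw [div_mul_cancel₀ _ hc]
  rw [hMAC a₀ c₀, hMBC b₀ c₀, hMC c₀]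
  exact hgoal


end CoreLemma
section Glue

variable {Ω : Type*} [Fintype Ω]

lemma sum_dist'_eq_one {α : Type*} [Fintype α] (q : Ω → ℝ) (hq1 : ∑ ω, q ω = 1)
    (X : Ω → α) : ∑ x, dist' q X x = 1 := by
  rw [← hq1]
  unfold dist'
  rw [Finset.sum_comm]
  exact Finset.sum_congr rfl fun ω _ => by simp

lemma mi_eq_zero_of_indep {α β : Type*} [Fintype α] [Fintype β]
    (q : Ω → ℝ) (hq : IsPMF q) (X : Ω → α) (Y : Ω → β)
    (h : ∀ x y, dist' q (fun ω => (X ω, Y ω)) (x, y) = dist' q X x * dist' q Y y) :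
    mi q X Y = 0 := by
  obtain ⟨hq0, hq1⟩ := hq
  have hXsum : ∑ x, dist' q X x = 1 := sum_dist'_eq_one q hq1 X
  have hYsum : ∑ y, dist' q Y y = 1 := sum_dist'_eq_one q hq1 Y
  have key : ∀ x y, dist' q (fun ω => (X ω, Y ω)) (x, y)
      * Real.logb 2 (dist' q (fun ω => (X ω, Y ω)) (x, y))
      = dist' q X x * dist' q Y y * Real.logb 2 (dist' q X x)
        + dist' q X x * dist' q Y y * Real.logb 2 (dist' q Y y) := by
    intro x y
    rw [h x y]
    rcases eq_or_ne (dist' q X x) 0 with hx | hx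
    · simp [hx]
    rcases eq_or_ne (dist' q Y y) 0 with hy | hy
    · simp [hy]
    rw [Real.logb_mul hx hy]
    ring
  have e1 : ∑ x, ∑ y, dist' q X x * dist' q Y y * Real.logb 2 (dist' q X x)
      = ∑ x, dist' q X x * Real.logb 2 (dist' q X x) := by
    refine Finset.sum_congr rfl fun x _ => ?_
    calc ∑ y, dist' q X x * dist' q Y y * Real.logb 2 (dist' q X x)
        = (dist' q X x * Real.logb 2 (dist' q X x)) * ∑ y, dist' q Y y := by
          rw [Finset.mul_sum]
          exact Finset.sum_congr rfl fun y _ => by ring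
      _ = _ := by rw [hYsum]; ring
  have e2 : ∑ x, ∑ y, dist' q X x * dist' q Y y * Real.logb 2 (dist' q Y y)
      = ∑ y, dist' q Y y * Real.logb 2 (dist' q Y y) := by
    rw [Finset.sum_comm]
    refine Finset.sum_congr rfl fun y _ => ?_
    calc ∑ x, dist' q X x * dist' q Y y * Real.logb 2 (dist' q Y y)
        = (dist' q Y y * Real.logb 2 (dist' q Y y)) * ∑ x, dist' q X x := by
          rw [Finset.mul_sum]
          exact Finset.sum_congr rfl fun x _ => by ring
      _ = _ := by rw [hXsum]; ring
  have hXY : ent q (fun ω => (X ω, Y ω)) = ent q X + ent q Y := by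
    rw [ent, ent, ent, Fintype.sum_prod_type]
    have hcong : ∑ x, ∑ y, dist' q (fun ω => (X ω, Y ω)) (x, y)
        * Real.logb 2 (dist' q (fun ω => (X ω, Y ω)) (x, y))
        = ∑ x, ∑ y, (dist' q X x * dist' q Y y * Real.logb 2 (dist' q X x)
          + dist' q X x * dist' q Y y * Real.logb 2 (dist' q Y y)) :=
      Finset.sum_congr rfl fun x _ => Finset.sum_congr rfl fun y _ => key x y
    rw [hcong]
    simp only [Finset.sum_add_distrib]
    rw [e1, e2]
    ring
  rw [mi, hXY]
  ring

lemma alg_lemma {I J : Type*} [Fintype I] [Fintype J]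
    (M N : ℝ) (G : I → ℝ) (GY : J → ℝ) (AX : I → ℝ) (BY : J → ℝ) (F HH : I → J → ℝ)
    (hM : 0 < M)
    (hAX : ∀ x, 0 < AX x)
    (eq1 : ∀ x y, F x y * G x = AX x * HH x y)
    (eq2 : ∀ x y, F x y * M = AX x * BY y)
    (hsumG : ∑ x, G x = N)
    (hsumH : ∀ y, ∑ x, HH x y = GY y) :
    ∀ x y, HH x y * N = G x * GY y := by
  have h5 : ∀ x y, HH x y * M = BY y * G x := by
    intro x y
    have h6 : AX x * (HH x y * M) = AX x * (BY y * G x) := by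
      calc AX x * (HH x y * M) = (F x y * G x) * M := by rw [eq1]; ring
        _ = (F x y * M) * G x := by ring
        _ = AX x * (BY y * G x) := by rw [eq2]; ring
    exact mul_left_cancel₀ (hAX x).ne' h6
  have h7 : ∀ y, GY y * M = BY y * N := by
    intro y
    rw [← hsumH y, ← hsumG, Finset.sum_mul, Finset.mul_sum]
    exact Finset.sum_congr rfl fun x _ => h5 x y
  intro x y
  have h8 : (HH x y * N) * M = (G x * GY y) * M := by
    calc (HH x y * N) * M = (HH x y * M) * N := by ring
      _ = (BY y * G x) * N := by rw [h5]
      _ = (BY y * N) * G x := by ring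
      _ = (GY y * M) * G x := by rw [h7]
      _ = (G x * GY y) * M := by ring
  exact mul_right_cancel₀ hM.ne' h8

end Glue
set_option maxHeartbeats 1000000 in
/-- For binary `X, Y` with `I(X ∧ Y) ≠ 0` and interactive `U^r` satisfying (P1)-(P2):
if both `X` and `Y` remain strictly supported given `U^r = u^r`, then
`I(X ∧ Y | U^{r-1} = u^{r-1}) = 0`. -/
theorem stmt14 {Ω 𝒰 : Type*} [Fintype Ω] [Fintype 𝒰] {r : ℕ} (hr : 1 ≤ r)
    (p : Ω → ℝ) (hp : IsPMF p) (X : Ω → Fin 2) (Y : Ω → Fin 2) (U : Fin r → Ω → 𝒰)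
    (hI : mi p X Y ≠ 0)
    (h1 : P1cond p X Y U) (h2 : P2cond p X Y U)
    (u : Fin r → 𝒰) (hu : 0 < dist' p (pre U r le_rfl) u)
    (hX : 0 < dist' (condPMF p (pre U r le_rfl) u) X 0
            * dist' (condPMF p (pre U r le_rfl) u) X 1)
    (hY : 0 < dist' (condPMF p (pre U r le_rfl) u) Y 0
            * dist' (condPMF p (pre U r le_rfl) u) Y 1) :
    mi (condPMF p (pre U (r - 1) (Nat.sub_le r 1))
          (fun k => u (Fin.castLE (Nat.sub_le r 1) k))) X Y = 0 := by
  have hp0 := hp.1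
  have jlt : r - 1 < r := by omega
  set j : Fin r := ⟨r - 1, jlt⟩ with hjdef
  set v : Fin (r - 1) → 𝒰 := fun k => u (Fin.castLE (Nat.sub_le r 1) k) with hvdef
  set W : Ω → (Fin (r - 1) → 𝒰) := pre U (r - 1) (Nat.sub_le r 1) with hWdef
  -- decomposition of the event `U^r = u`
  have F0 : ∀ ω, pre U r le_rfl ω = u ↔ (U j ω = u j ∧ W ω = v) := by
    intro ω
    constructor
    · intro h
      have h' : ∀ k : Fin r, U k ω = u k := by
        intro k
        have hk := congrFun h k
        simpa [pre, show Fin.castLE le_rfl k = k from Fin.ext rfl] using hk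
      exact ⟨h' j, funext fun k => h' _⟩
    · rintro ⟨hj1, hW1⟩
      funext k
      show U (Fin.castLE le_rfl k) ω = u k
      rw [show Fin.castLE le_rfl k = k from Fin.ext rfl]
      by_cases hk : k.val < r - 1
      · have hk2 := congrFun hW1 ⟨k.val, hk⟩
        simpa [hWdef, hvdef, pre,
          show Fin.castLE (Nat.sub_le r 1) (⟨k.val, hk⟩ : Fin (r - 1)) = k from Fin.ext rfl]
          using hk2
      · have hk2 : k = j := Fin.ext (by simp [hjdef]; omega)
        rw [hk2]; exact hj1
    -- scalar joint quantities
  set F : Fin 2 → Fin 2 → ℝ :=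
    fun x y => S p (fun ω => X ω = x ∧ Y ω = y ∧ U j ω = u j ∧ W ω = v) with hFdef
  set AX : Fin 2 → ℝ := fun x => S p (fun ω => X ω = x ∧ U j ω = u j ∧ W ω = v) with hAXdef
  set BY : Fin 2 → ℝ := fun y => S p (fun ω => Y ω = y ∧ U j ω = u j ∧ W ω = v) with hBYdef
  set G : Fin 2 → ℝ := fun x => S p (fun ω => X ω = x ∧ W ω = v) with hGdef
  set GY : Fin 2 → ℝ := fun y => S p (fun ω => Y ω = y ∧ W ω = v) with hGYdef
  set HH : Fin 2 → Fin 2 → ℝ :=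
    fun x y => S p (fun ω => X ω = x ∧ Y ω = y ∧ W ω = v) with hHHdef
  set M : ℝ := dist' p (pre U r le_rfl) u with hMdef
  set N : ℝ := S p (fun ω => W ω = v) with hNdef
  have hN : 0 < N := by
    have hmono : dist' p (pre U r le_rfl) u ≤ N := by
      rw [dist'_S]
      exact S_mono p hp0 fun ω h => ((F0 ω).mp h).2
    exact lt_of_lt_of_le hu hmono
  -- (P2) in scalar form
  have eq2 : ∀ x y, F x y * M = AX x * BY y := by
    intro x y
    have e := cmi_zero_imp p hp X Y (pre U r le_rfl) h2 x y u
    have c1 : dist' p (fun ω => ((X ω, Y ω), pre U r le_rfl ω)) ((x, y), u) = F x y := by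
      rw [dist'_S, hFdef]
      refine S_congr p fun ω => ?_
      have := F0 ω
      simp only [Prod.ext_iff]
      all_goals tauto
    have c2 : dist' p (fun ω => (X ω, pre U r le_rfl ω)) (x, u) = AX x := by
      rw [dist'_S, hAXdef]
      refine S_congr p fun ω => ?_
      have := F0 ω
      simp only [Prod.ext_iff]
      all_goals tauto
    have c3 : dist' p (fun ω => (Y ω, pre U r le_rfl ω)) (y, u) = BY y := by
      rw [dist'_S, hBYdef]
      refine S_congr p fun ω => ?_
      have := F0 ω
      simp only [Prod.ext_iff]
      all_goals tauto
    rw [c1, c2, c3] at e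
    exact e
  -- positivity of AX, BY
  have hAXpos : ∀ x, 0 < AX x := by
    have hc : ∀ x, dist' (condPMF p (pre U r le_rfl) u) X x = AX x / M := by
      intro x
      rw [dist'_condPMF, hAXdef]
      congr 1
      refine S_congr p fun ω => ?_
      have := F0 ω
      tauto
    rw [hc 0, hc 1] at hX
    have h0 : 0 ≤ AX 0 := S_nonneg p hp0 _
    have h1' : 0 ≤ AX 1 := S_nonneg p hp0 _
    rcases mul_pos_iff.mp hX with ⟨ha, hb⟩ | ⟨ha, hb⟩
    · intro x
      have ha' : 0 < AX 0 := by
        rcases lt_or_eq_of_le h0 with h | h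
        · exact h
        · rw [← h] at ha; simp at ha
      have hb' : 0 < AX 1 := by
        rcases lt_or_eq_of_le h1' with h | h
        · exact h
        · rw [← h] at hb; simp at hb
      fin_cases x <;> assumption
    · exfalso
      exact absurd ha (not_lt.mpr (div_nonneg h0 hu.le))
  have hBYpos : ∀ y, 0 < BY y := by
    have hc : ∀ y, dist' (condPMF p (pre U r le_rfl) u) Y y = BY y / M := by
      intro y
      rw [dist'_condPMF, hBYdef]
      congr 1
      refine S_congr p fun ω => ?_
      have := F0 ω
      tauto
    rw [hc 0, hc 1] at hY
    have h0 : 0 ≤ BY 0 := S_nonneg p hp0 _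
    have h1' : 0 ≤ BY 1 := S_nonneg p hp0 _
    rcases mul_pos_iff.mp hY with ⟨ha, hb⟩ | ⟨ha, hb⟩
    · intro y
      have ha' : 0 < BY 0 := by
        rcases lt_or_eq_of_le h0 with h | h
        · exact h
        · rw [← h] at ha; simp at ha
      have hb' : 0 < BY 1 := by
        rcases lt_or_eq_of_le h1' with h | h
        · exact h
        · rw [← h] at hb; simp at hb
      fin_cases y <;> assumption
    · exfalso
      exact absurd ha (not_lt.mpr (div_nonneg h0 hu.le))
  -- marginalization sums
  have hsumG : ∑ x, G x = N := by
    rw [hNdef, ← S_fiber p (fun ω => W ω = v) X]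
    exact Finset.sum_congr rfl fun x _ => S_congr p fun ω => by tauto
  have hsumGY : ∑ y, GY y = N := by
    rw [hNdef, ← S_fiber p (fun ω => W ω = v) Y]
    exact Finset.sum_congr rfl fun y _ => S_congr p fun ω => by tauto
  have hsumHx : ∀ y, ∑ x, HH x y = GY y := by
    intro y
    rw [hGYdef]
    show _ = S p _
    rw [← S_fiber p (fun ω => Y ω = y ∧ W ω = v) X]
    exact Finset.sum_congr rfl fun x _ => S_congr p fun ω => by tauto
  have hsumHy : ∀ x, ∑ y, HH x y = G x := by
    intro x
    rw [hGdef]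
    show _ = S p _
    rw [← S_fiber p (fun ω => X ω = x ∧ W ω = v) Y]
    exact Finset.sum_congr rfl fun y _ => S_congr p fun ω => by tauto
  -- main independence step
  have hind : ∀ x y, HH x y * N = G x * GY y := by
    rcases Nat.even_or_odd (r - 1) with hpar | hpar
    · -- last message sent by 𝒳
      have hE : cmi p (U j) Y (fun ω => (X ω, W ω)) = 0 := (h1 j).1 hpar
      have eq1 : ∀ x y, F x y * G x = AX x * HH x y := by
        intro x y
        have e := cmi_zero_imp p hp (U j) Y (fun ω => (X ω, W ω)) hE (u j) y (x, v)
        have c1 : dist' p (fun ω => ((U j ω, Y ω), (X ω, W ω))) ((u j, y), (x, v))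
            = F x y := by
          rw [dist'_S, hFdef]
          refine S_congr p fun ω => ?_
          simp only [Prod.ext_iff]
          all_goals tauto
        have c2 : dist' p (fun ω => (X ω, W ω)) (x, v) = G x := by
          rw [dist'_S, hGdef]
          refine S_congr p fun ω => ?_
          simp only [Prod.ext_iff]
          all_goals tauto
        have c3 : dist' p (fun ω => (U j ω, (X ω, W ω))) (u j, (x, v)) = AX x := by
          rw [dist'_S, hAXdef]
          refine S_congr p fun ω => ?_
          simp only [Prod.ext_iff]
          all_goals tauto
        have c4 : dist' p (fun ω => (Y ω, (X ω, W ω))) (y, (x, v)) = HH x y := by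
          rw [dist'_S, hHHdef]
          refine S_congr p fun ω => ?_
          simp only [Prod.ext_iff]
          all_goals tauto
        rw [c1, c2, c3, c4] at e
        exact e
      exact alg_lemma M N G GY AX BY F HH hu hAXpos eq1 eq2 hsumG hsumHx
    · -- last message sent by 𝒴
      have hE : cmi p (U j) X (fun ω => (Y ω, W ω)) = 0 :=
        (h1 j).2 (by simpa [Nat.even_iff, Nat.odd_iff] using hpar)
      have eq1 : ∀ x y, F x y * GY y = BY y * HH x y := by
        intro x y
        have e := cmi_zero_imp p hp (U j) X (fun ω => (Y ω, W ω)) hE (u j) x (y, v)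
        have c1 : dist' p (fun ω => ((U j ω, X ω), (Y ω, W ω))) ((u j, x), (y, v))
            = F x y := by
          rw [dist'_S, hFdef]
          refine S_congr p fun ω => ?_
          simp only [Prod.ext_iff]
          all_goals tauto
        have c2 : dist' p (fun ω => (Y ω, W ω)) (y, v) = GY y := by
          rw [dist'_S, hGYdef]
          refine S_congr p fun ω => ?_
          simp only [Prod.ext_iff]
          all_goals tauto
        have c3 : dist' p (fun ω => (U j ω, (Y ω, W ω))) (u j, (y, v)) = BY y := by
          rw [dist'_S, hBYdef]
          refine S_congr p fun ω => ?_
          simp only [Prod.ext_iff]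
          all_goals tauto
        have c4 : dist' p (fun ω => (X ω, (Y ω, W ω))) (x, (y, v)) = HH x y := by
          rw [dist'_S, hHHdef]
          refine S_congr p fun ω => ?_
          simp only [Prod.ext_iff]
          all_goals tauto
        rw [c1, c2, c3, c4] at e
        exact e
      have hsym := alg_lemma M N GY G BY AX (fun y x => F x y) (fun y x => HH x y)
        hu hBYpos (fun y x => eq1 x y) (fun y x => by rw [eq2 x y]; ring) hsumGY hsumHy
      exact fun x y => (hsym y x).trans (mul_comm _ _)
  -- conclude via independence under the conditional pmf
  have hq : IsPMF (condPMF p W v) := by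
    apply condPMF_isPMF p hp0 W v
    rw [dist'_S]
    exact hN
  refine mi_eq_zero_of_indep _ hq X Y ?_
  intro x y
  have d1 : dist' (condPMF p W v) (fun ω => (X ω, Y ω)) (x, y) = HH x y / N := by
    rw [dist'_condPMF, hHHdef]
    rw [show dist' p W v = N from rfl]
    congr 1
    refine S_congr p fun ω => ?_
    simp only [Prod.ext_iff]
    tauto
  have d2 : dist' (condPMF p W v) X x = G x / N := by
    rw [dist'_condPMF, hGdef]
    rw [show dist' p W v = N from rfl]
  have d3 : dist' (condPMF p W v) Y y = GY y / N := by
    rw [dist'_condPMF, hGYdef]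
    rw [show dist' p W v = N from rfl]
  rw [d1, d2, d3]
  rw [div_mul_div_comm]
  rw [eq_div_iff (by positivity)]
  field_simp
  nlinarith [hind x y, hN]
end
end

section
/- Let X, Y be binary symmetric with P(X=Y=0)=P(X=Y=1)=(1−δ)/2 and P(X=0,Y=1)=P(X=1,Y=0)=δ/2 for 0<δ<1/2. For any random variables U₁,...,U_r satisfying the interactive Markov conditions (P1)-(P2), we have I(X, Y ∧ U^r) ≥ min{H(X), H(Y)} = 1. -/
open scoped Classical
open Finset Real

noncomputable section

variable {Ω : Type*} [Fintype Ω]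

/-! ### Auxiliary lemmas -/

section MyHelpers

variable {α β γ : Type*}

lemma my_dist'_nonneg (p : Ω → ℝ) (hp : ∀ ω, 0 ≤ p ω) (Z : Ω → α) (a : α) :
    0 ≤ dist' p Z a :=
  Finset.sum_nonneg fun ω _ => by split_ifs; exacts [hp ω, le_rfl]

lemma my_sum_dist' [Fintype α] (p : Ω → ℝ) (Z : Ω → α) :
    ∑ a, dist' p Z a = ∑ ω, p ω := by
  rw [show (∑ a, dist' p Z a) = ∑ a, ∑ ω, ite (Z ω = a) (p ω) 0 from rfl, Finset.sum_comm]
  exact Finset.sum_congr rfl fun ω _ => by simp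

lemma my_dist'_congr (p : Ω → ℝ) (Z : Ω → α) (W : Ω → β) (a : α) (b : β)
    (h : ∀ ω, Z ω = a ↔ W ω = b) : dist' p Z a = dist' p W b :=
  Finset.sum_congr rfl fun ω _ => by rw [if_congr (h ω) rfl rfl]

lemma my_marg_snd [Fintype β] (p : Ω → ℝ) (Z : Ω → α) (W : Ω → β) (a : α) :
    ∑ b, dist' p (fun ω => (Z ω, W ω)) (a, b) = dist' p Z a := by
  simp only [dist']
  rw [Finset.sum_comm]
  refine Finset.sum_congr rfl fun ω _ => ?_
  by_cases hz : Z ω = a <;> simp [Prod.ext_iff, hz]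

lemma my_marg_fst [Fintype α] (p : Ω → ℝ) (Z : Ω → α) (W : Ω → β) (b : β) :
    ∑ a, dist' p (fun ω => (Z ω, W ω)) (a, b) = dist' p W b := by
  simp only [dist']
  rw [Finset.sum_comm]
  refine Finset.sum_congr rfl fun ω _ => ?_
  by_cases hw : W ω = b <;> simp [Prod.ext_iff, hw]

/-- `-(t * logb 2 t)`, the summand of base-2 entropy. -/
def nml (t : ℝ) : ℝ := -(t * Real.logb 2 t)

lemma my_ent_eq [Fintype α] (p : Ω → ℝ) (Z : Ω → α) :
    ent p Z = ∑ a, nml (dist' p Z a) := by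
  simp [ent, nml]

lemma nml_zero : nml 0 = 0 := by simp [nml]

lemma nml_one : nml 1 = 0 := by simp [nml]

lemma nml_add_of_mul_eq_zero {s t : ℝ} (h : s * t = 0) : nml s + nml t = nml (s + t) := by
  rcases mul_eq_zero.1 h with h | h <;> simp [h, nml_zero]

lemma nml_half_mul (t : ℝ) (ht : 0 < t) : nml (t / 2) = t / 2 + nml t / 2 := by
  rw [nml, nml, Real.logb_div (ne_of_gt ht) two_ne_zero,
    Real.logb_self_eq_one one_lt_two]
  ring

lemma nml_half : nml (1 / 2 : ℝ) = 1 / 2 := by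
  have := nml_half_mul 1 one_pos
  simpa [nml_one] using this

/-- Log-sum inequality. -/
lemma my_logsum {ι : Type*} (s : Finset ι) (a c : ι → ℝ)
    (ha : ∀ i ∈ s, 0 ≤ a i) (hac : ∀ i ∈ s, a i ≤ c i) :
    (∑ i ∈ s, a i) * Real.log (∑ i ∈ s, a i) - (∑ i ∈ s, a i) * Real.log (∑ i ∈ s, c i)
      ≤ ∑ i ∈ s, (a i * Real.log (a i) - a i * Real.log (c i)) := by
  set A := ∑ i ∈ s, a i with hA
  set S := ∑ i ∈ s, c i with hS
  have hA0 : 0 ≤ A := Finset.sum_nonneg ha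
  have hAS : A ≤ S := Finset.sum_le_sum hac
  rcases eq_or_lt_of_le hA0 with h0 | hApos
  · have hz : ∀ i ∈ s, a i = 0 := by
      intro i hi
      exact (Finset.sum_eq_zero_iff_of_nonneg ha).1 h0.symm i hi
    rw [← h0]
    calc (0:ℝ) * Real.log 0 - 0 * Real.log S = 0 := by ring
    _ ≤ ∑ i ∈ s, (a i * Real.log (a i) - a i * Real.log (c i)) := by
        apply le_of_eq
        refine (Finset.sum_eq_zero fun i hi => ?_).symm
        rw [hz i hi]; ring
  · have hSpos : 0 < S := lt_of_lt_of_le hApos hAS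
    set t := s.filter (fun i => a i ≠ 0) with ht
    have hsub : t ⊆ s := Finset.filter_subset _ _
    have hrw : ∑ i ∈ s, (a i * Real.log (a i) - a i * Real.log (c i))
        = ∑ i ∈ t, (a i * Real.log (a i) - a i * Real.log (c i)) := by
      refine (Finset.sum_subset hsub fun i hi hni => ?_).symm
      have : a i = 0 := by
        by_contra hne
        exact hni (Finset.mem_filter.2 ⟨hi, hne⟩)
      rw [this]; ring
    have hta : ∑ i ∈ t, a i = A := by rw [hA, ht]; exact Finset.sum_filter_ne_zero s
    have htc : ∑ i ∈ t, c i ≤ S := by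
      refine Finset.sum_le_sum_of_subset_of_nonneg hsub fun i hi _ => ?_
      exact le_trans (ha i hi) (hac i hi)
    have hterm : ∀ i ∈ t, a i * Real.log A - a i * Real.log S + (a i - A / S * c i)
        ≤ a i * Real.log (a i) - a i * Real.log (c i) := by
      intro i hit
      have his : i ∈ s := hsub hit
      have hai : 0 < a i :=
        lt_of_le_of_ne (ha i his) (Ne.symm (Finset.mem_filter.1 hit).2)
      have hci : 0 < c i := lt_of_lt_of_le hai (hac i his)
      have hx : (0:ℝ) < c i * A / (a i * S) := by positivity
      have hlog := Real.log_le_sub_one_of_pos hx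
      have hexp : Real.log (c i * A / (a i * S))
          = Real.log (c i) + Real.log A - Real.log (a i) - Real.log S := by
        rw [Real.log_div (by positivity) (by positivity),
          Real.log_mul (ne_of_gt hci) (ne_of_gt hApos),
          Real.log_mul (ne_of_gt hai) (ne_of_gt hSpos)]
        ring
      rw [hexp] at hlog
      have hmul := mul_le_mul_of_nonneg_left hlog (le_of_lt hai)
      have heq : a i * (c i * A / (a i * S) - 1) = A / S * c i - a i := by
        field_simp
      rw [heq] at hmul
      nlinarith [hmul]
    have hsumt : ∑ i ∈ t, (a i * Real.log A - a i * Real.log S + (a i - A / S * c i))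
        ≤ ∑ i ∈ t, (a i * Real.log (a i) - a i * Real.log (c i)) :=
      Finset.sum_le_sum hterm
    have hlhs : ∑ i ∈ t, (a i * Real.log A - a i * Real.log S + (a i - A / S * c i))
        = A * Real.log A - A * Real.log S + (A - A / S * ∑ i ∈ t, c i) := by
      rw [Finset.sum_add_distrib, Finset.sum_sub_distrib, ← Finset.sum_mul, ← Finset.sum_mul,
        Finset.sum_sub_distrib, ← Finset.mul_sum, hta]
    have hfin : A - A / S * ∑ i ∈ t, c i ≥ 0 := by
      have h1 : A / S * ∑ i ∈ t, c i ≤ A / S * S :=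
        mul_le_mul_of_nonneg_left htc (by positivity)
      have h2 : A / S * S = A := by field_simp
      linarith
    rw [hrw]
    calc A * Real.log A - A * Real.log S
        ≤ A * Real.log A - A * Real.log S + (A - A / S * ∑ i ∈ t, c i) := by linarith
    _ = ∑ i ∈ t, (a i * Real.log A - a i * Real.log S + (a i - A / S * c i)) := hlhs.symm
    _ ≤ _ := hsumt

/-- Superadditivity of the "grouping" entropy gap, via the log-sum inequality. -/
lemma my_superadd {ι : Type*} [Fintype ι] (a b : ι → ℝ)
    (ha : ∀ i, 0 ≤ a i) (hb : ∀ i, 0 ≤ b i) :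
    ∑ i, (nml (a i) + nml (b i) - nml (a i + b i))
      ≤ nml (∑ i, a i) + nml (∑ i, b i) - nml ((∑ i, a i) + (∑ i, b i)) := by
  have l2 : (0:ℝ) < Real.log 2 := Real.log_pos one_lt_two
  set A := ∑ i, a i
  set B := ∑ i, b i
  have hs : ∀ i : ι, a i ≤ a i + b i := fun i => by linarith [hb i]
  have hs' : ∀ i : ι, b i ≤ a i + b i := fun i => by linarith [ha i]
  have k1 := my_logsum Finset.univ a (fun i => a i + b i) (fun i _ => ha i) (fun i _ => hs i)
  have k2 := my_logsum Finset.univ b (fun i => a i + b i) (fun i _ => hb i) (fun i _ => hs' i)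
  have hsum : ∑ i, (a i + b i) = A + B := Finset.sum_add_distrib
  rw [hsum] at k1 k2
  have key : ∑ i, ((a i + b i) * Real.log (a i + b i)
        - a i * Real.log (a i) - b i * Real.log (b i))
      ≤ (A + B) * Real.log (A + B) - A * Real.log A - B * Real.log B := by
    have e : ∑ i, (a i * Real.log (a i) - a i * Real.log (a i + b i))
        + ∑ i, (b i * Real.log (b i) - b i * Real.log (a i + b i))
        = ∑ i, (a i * Real.log (a i) + b i * Real.log (b i)
            - (a i + b i) * Real.log (a i + b i)) := by
      rw [← Finset.sum_add_distrib]
      exact Finset.sum_congr rfl fun i _ => by ring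
    have e2 : ∑ i, (a i * Real.log (a i) + b i * Real.log (b i)
            - (a i + b i) * Real.log (a i + b i))
        = -∑ i, ((a i + b i) * Real.log (a i + b i)
            - a i * Real.log (a i) - b i * Real.log (b i)) := by
      rw [← Finset.sum_neg_distrib]
      exact Finset.sum_congr rfl fun i _ => by ring
    have := add_le_add k1 k2
    rw [e, e2] at this
    linarith
  have hnml : ∀ t : ℝ, nml t = -(t * Real.log t) / Real.log 2 := by
    intro t
    simp only [nml, Real.logb, neg_div]
    ring
  simp only [hnml]
  have lhs_eq : ∑ i, (-(a i * Real.log (a i)) / Real.log 2 + -(b i * Real.log (b i)) / Real.log 2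
        - -((a i + b i) * Real.log (a i + b i)) / Real.log 2)
      = (∑ i, ((a i + b i) * Real.log (a i + b i)
          - a i * Real.log (a i) - b i * Real.log (b i))) / Real.log 2 := by
    rw [Finset.sum_div]
    exact Finset.sum_congr rfl fun i _ => by ring
  rw [lhs_eq]
  have rhs_eq : -(A * Real.log A) / Real.log 2 + -(B * Real.log B) / Real.log 2
        - -((A + B) * Real.log (A + B)) / Real.log 2
      = ((A + B) * Real.log (A + B) - A * Real.log A - B * Real.log B) / Real.log 2 := by
    ring
  rw [rhs_eq]
  gcongr

/-- Rotate a triple of nested sums. -/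
lemma sum3_rot {α β γ : Type*} [Fintype α] [Fintype β] [Fintype γ] (f : α → β → γ → ℝ) :
    ∑ a, ∑ b, ∑ c, f a b c = ∑ c, ∑ a, ∑ b, f a b c := by
  rw [Finset.sum_comm]
  rw [show (∑ b : β, ∑ a : α, ∑ c : γ, f a b c) = ∑ b : β, ∑ c : γ, ∑ a : α, f a b c from
    Finset.sum_congr rfl fun b _ => Finset.sum_comm]
  rw [Finset.sum_comm]
  exact Finset.sum_congr rfl fun c _ => Finset.sum_comm

end MyHelpers

set_option maxHeartbeats 2000000 in
/-- Vanishing conditional mutual information implies conditional independence. -/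
lemma factor_of_cmi_zero {α β γ : Type*} [Fintype α] [Fintype β] [Fintype γ]
    (p : Ω → ℝ) (hp : IsPMF p) (A : Ω → α) (B : Ω → β) (C : Ω → γ)
    (h : cmi p A B C = 0) (a : α) (b : β) (c : γ) :
    dist' p (fun ω => ((A ω, B ω), C ω)) ((a, b), c) * dist' p C c
      = dist' p (fun ω => (A ω, C ω)) (a, c) * dist' p (fun ω => (B ω, C ω)) (b, c) := by
  classical
  set T : α → β → γ → ℝ := fun a b c => dist' p (fun ω => ((A ω, B ω), C ω)) ((a, b), c)
    with hTdef
  set T13 : α → γ → ℝ := fun a c => ∑ b, T a b c with hT13def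
  set T23 : β → γ → ℝ := fun b c => ∑ a, T a b c with hT23def
  set T3 : γ → ℝ := fun c => ∑ a, ∑ b, T a b c with hT3def
  have hT0 : ∀ a b c, 0 ≤ T a b c := fun a b c => my_dist'_nonneg p hp.1 _ _
  have hT130 : ∀ a c, 0 ≤ T13 a c := fun a c => Finset.sum_nonneg fun _ _ => hT0 _ _ _
  have hT230 : ∀ b c, 0 ≤ T23 b c := fun b c => Finset.sum_nonneg fun _ _ => hT0 _ _ _
  have hT30 : ∀ c, 0 ≤ T3 c :=
    fun c => Finset.sum_nonneg fun _ _ => Finset.sum_nonneg fun _ _ => hT0 _ _ _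
  have hd13 : ∀ a c, dist' p (fun ω => (A ω, C ω)) (a, c) = T13 a c := by
    intro a c
    rw [← my_marg_snd p (fun ω => (A ω, C ω)) B (a, c)]
    refine Finset.sum_congr rfl fun b _ => my_dist'_congr p _ _ _ _ fun ω => ?_
    simp only [Prod.ext_iff]; tauto
  have hd23 : ∀ b c, dist' p (fun ω => (B ω, C ω)) (b, c) = T23 b c := by
    intro b c
    rw [← my_marg_fst p A (fun ω => (B ω, C ω)) (b, c)]
    refine Finset.sum_congr rfl fun a _ => my_dist'_congr p _ _ _ _ fun ω => ?_
    simp only [Prod.ext_iff]; tauto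
  have hd3 : ∀ c, dist' p C c = T3 c := by
    intro c
    rw [← my_marg_fst p (fun ω => (A ω, B ω)) C c, Fintype.sum_prod_type]
  have htot : ∑ a, ∑ b, ∑ c, T a b c = 1 := by
    have h1 := my_sum_dist' p (fun ω => ((A ω, B ω), C ω))
    rw [hp.2] at h1
    rw [← h1, Fintype.sum_prod_type, Fintype.sum_prod_type]
  have e3 : ent p (fun ω => ((A ω, B ω), C ω))
      = -∑ a, ∑ b, ∑ c, T a b c * Real.logb 2 (T a b c) := by
    rw [ent, Fintype.sum_prod_type, Fintype.sum_prod_type]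
  have e1 : ent p (fun ω => (A ω, C ω))
      = -∑ a, ∑ b, ∑ c, T a b c * Real.logb 2 (T13 a c) := by
    rw [ent, Fintype.sum_prod_type]
    congr 1
    refine Finset.sum_congr rfl fun a _ => ?_
    rw [Finset.sum_comm]
    refine Finset.sum_congr rfl fun c _ => ?_
    rw [hd13]
    simp only [hT13def, Finset.sum_mul]
  have e2 : ent p (fun ω => (B ω, C ω))
      = -∑ a, ∑ b, ∑ c, T a b c * Real.logb 2 (T23 b c) := by
    rw [ent, Fintype.sum_prod_type]
    rw [show (∑ a, ∑ b, ∑ c, T a b c * Real.logb 2 (T23 b c))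
        = ∑ b, ∑ c, (∑ a, T a b c) * Real.logb 2 (T23 b c) from ?_]
    · congr 1
      refine Finset.sum_congr rfl fun b _ => Finset.sum_congr rfl fun c _ => ?_
      rw [hd23]
    · rw [Finset.sum_comm]
      refine Finset.sum_congr rfl fun b _ => ?_
      rw [Finset.sum_comm]
      refine Finset.sum_congr rfl fun c _ => ?_
      exact (Finset.sum_mul Finset.univ (fun a => T a b c) (Real.logb 2 (T23 b c))).symm
  have e4 : ent p C = -∑ a, ∑ b, ∑ c, T a b c * Real.logb 2 (T3 c) := by
    rw [ent, sum3_rot]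
    congr 1
    refine Finset.sum_congr rfl fun c _ => ?_
    rw [hd3]
    simp only [hT3def, Finset.sum_mul]
  have hcmi2 : ∑ a, ∑ b, ∑ c, T a b c * (Real.logb 2 (T a b c) + Real.logb 2 (T3 c)
      - Real.logb 2 (T13 a c) - Real.logb 2 (T23 b c)) = 0 := by
    have hc := h
    rw [cmi, e1, e2, e3, e4] at hc
    have expand : ∑ a, ∑ b, ∑ c, T a b c * (Real.logb 2 (T a b c) + Real.logb 2 (T3 c)
        - Real.logb 2 (T13 a c) - Real.logb 2 (T23 b c))
        = (∑ a, ∑ b, ∑ c, T a b c * Real.logb 2 (T a b c))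
          + (∑ a, ∑ b, ∑ c, T a b c * Real.logb 2 (T3 c))
          - (∑ a, ∑ b, ∑ c, T a b c * Real.logb 2 (T13 a c))
          - (∑ a, ∑ b, ∑ c, T a b c * Real.logb 2 (T23 b c)) := by
      simp only [mul_add, mul_sub, Finset.sum_add_distrib, Finset.sum_sub_distrib]
    rw [expand]
    linarith
  have l2pos : (0:ℝ) < Real.log 2 := Real.log_pos one_lt_two
  set t : α → β → γ → ℝ := fun a b c => T a b c * (Real.log (T a b c) + Real.log (T3 c)
      - Real.log (T13 a c) - Real.log (T23 b c)) with htdef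
  have hsumt : ∑ a, ∑ b, ∑ c, t a b c = 0 := by
    have e : ∑ a, ∑ b, ∑ c, t a b c
        = (∑ a, ∑ b, ∑ c, T a b c * (Real.logb 2 (T a b c) + Real.logb 2 (T3 c)
            - Real.logb 2 (T13 a c) - Real.logb 2 (T23 b c))) * Real.log 2 := by
      rw [Finset.sum_mul]
      refine Finset.sum_congr rfl fun a _ => ?_
      rw [Finset.sum_mul]
      refine Finset.sum_congr rfl fun b _ => ?_
      rw [Finset.sum_mul]
      refine Finset.sum_congr rfl fun c _ => ?_
      simp only [htdef, Real.logb]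
      field_simp
    rw [e, hcmi2, zero_mul]
  set q : α → β → γ → ℝ := fun a b c =>
    if T3 c = 0 then 0 else T13 a c * T23 b c / T3 c with hqdef
  have hq0 : ∀ a b c, 0 ≤ q a b c := by
    intro a b c
    simp only [hqdef]
    split_ifs with h3
    · exact le_rfl
    · exact div_nonneg (mul_nonneg (hT130 a c) (hT230 b c)) (hT30 c)
  have hqsum : ∑ a, ∑ b, ∑ c, q a b c = 1 := by
    rw [sum3_rot]
    have percx : ∀ c, ∑ a, ∑ b, q a b c = T3 c := by
      intro c
      by_cases h3 : T3 c = 0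
      · simp only [hqdef, if_pos h3, Finset.sum_const_zero, h3]
      · simp only [hqdef, if_neg h3]
        have step1 : ∀ a, ∑ b, T13 a c * T23 b c / T3 c
            = T13 a c * (∑ b, T23 b c) / T3 c := by
          intro a
          rw [← Finset.sum_div, ← Finset.mul_sum]
        simp only [step1]
        rw [← Finset.sum_div, ← Finset.sum_mul]
        have hb : ∑ b, T23 b c = T3 c := Finset.sum_comm
        have ha : ∑ a, T13 a c = T3 c := rfl
        rw [hb, ha]
        field_simp
    rw [show (∑ c, ∑ a, ∑ b, q a b c) = ∑ c, T3 c from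
      Finset.sum_congr rfl fun c _ => percx c]
    rw [← htot]
    exact (sum3_rot T).symm
  set g : α → β → γ → ℝ := fun a b c => t a b c - T a b c + q a b c with hgdef
  have hg0 : ∀ a b c, 0 ≤ g a b c := by
    intro a b c
    by_cases hT : T a b c = 0
    · have ht0 : t a b c = 0 := by simp [htdef, hT]
      simp only [hgdef, ht0, hT]
      simpa using hq0 a b c
    · have hTpos : 0 < T a b c := lt_of_le_of_ne (hT0 a b c) (Ne.symm hT)
      have h13 : 0 < T13 a c :=
        lt_of_lt_of_le hTpos (Finset.single_le_sum (fun b' _ => hT0 a b' c) (Finset.mem_univ b))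
      have h23 : 0 < T23 b c :=
        lt_of_lt_of_le hTpos (Finset.single_le_sum (fun a' _ => hT0 a' b c) (Finset.mem_univ a))
      have h3 : 0 < T3 c := lt_of_lt_of_le h13
        (Finset.single_le_sum (fun a' _ => Finset.sum_nonneg fun b' _ => hT0 a' b' c)
          (Finset.mem_univ a))
      have hqval : q a b c = T a b c * (T13 a c * T23 b c / (T a b c * T3 c)) := by
        simp only [hqdef, if_neg (ne_of_gt h3)]
        field_simp
      have hlogx : Real.log (T13 a c * T23 b c / (T a b c * T3 c))
          = Real.log (T13 a c) + Real.log (T23 b c) - Real.log (T a b c) - Real.log (T3 c) := by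
        rw [Real.log_div (by positivity) (by positivity),
          Real.log_mul (ne_of_gt h13) (ne_of_gt h23),
          Real.log_mul (ne_of_gt hTpos) (ne_of_gt h3)]
        ring
      have htval : t a b c = -(T a b c * Real.log (T13 a c * T23 b c / (T a b c * T3 c))) := by
        simp only [htdef]
        rw [hlogx]
        ring
      have hxpos : (0:ℝ) < T13 a c * T23 b c / (T a b c * T3 c) := by positivity
      have hlog := Real.log_le_sub_one_of_pos hxpos
      have hmul := mul_le_mul_of_nonneg_left hlog (le_of_lt hTpos)
      simp only [hgdef]
      rw [htval, hqval]
      nlinarith [hmul]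
  have hgsum : ∑ a, ∑ b, ∑ c, g a b c = 0 := by
    simp only [hgdef, Finset.sum_add_distrib, Finset.sum_sub_distrib]
    rw [hsumt, htot, hqsum]
    ring
  have hgz : ∀ a b c, g a b c = 0 := by
    have hflat : ∑ x : α × β × γ, g x.1 x.2.1 x.2.2 = 0 := by
      rw [Fintype.sum_prod_type]
      rw [show (∑ x : α, ∑ y : β × γ, g x y.1 y.2) = ∑ a, ∑ b, ∑ c, g a b c from
        Finset.sum_congr rfl fun a _ => Fintype.sum_prod_type _]
      exact hgsum
    intro a b c
    have := (Finset.sum_eq_zero_iff_of_nonneg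
      (fun x _ => hg0 x.1 x.2.1 x.2.2)).1 hflat (a, b, c) (Finset.mem_univ _)
    exact this
  -- conclude pointwise factorization
  have key : T a b c * T3 c = T13 a c * T23 b c := by
    by_cases hT : T a b c = 0
    · have ht0 : t a b c = 0 := by simp [htdef, hT]
      have hq : q a b c = 0 := by
        have := hgz a b c
        simp only [hgdef, ht0, hT] at this
        linarith
      simp only [hqdef] at hq
      split_ifs at hq with h3
      · have hle : T13 a c ≤ T3 c :=
          Finset.single_le_sum (fun a' _ => Finset.sum_nonneg fun b' _ => hT0 a' b' c)
            (Finset.mem_univ a)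
        have h13z : T13 a c = 0 := le_antisymm (h3 ▸ hle) (hT130 a c)
        rw [hT, h13z]
        ring
      · have hnum : T13 a c * T23 b c = 0 := by
          rcases div_eq_zero_iff.1 hq with h' | h'
          · exact h'
          · exact absurd h' h3
        rw [hT, hnum]
        ring
    · have hTpos : 0 < T a b c := lt_of_le_of_ne (hT0 a b c) (Ne.symm hT)
      have h13 : 0 < T13 a c :=
        lt_of_lt_of_le hTpos (Finset.single_le_sum (fun b' _ => hT0 a b' c) (Finset.mem_univ b))
      have h23 : 0 < T23 b c :=
        lt_of_lt_of_le hTpos (Finset.single_le_sum (fun a' _ => hT0 a' b c) (Finset.mem_univ a))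
      have h3 : 0 < T3 c := lt_of_lt_of_le h13
        (Finset.single_le_sum (fun a' _ => Finset.sum_nonneg fun b' _ => hT0 a' b' c)
          (Finset.mem_univ a))
      have hqval : q a b c = T a b c * (T13 a c * T23 b c / (T a b c * T3 c)) := by
        simp only [hqdef, if_neg (ne_of_gt h3)]
        field_simp
      have hlogx : Real.log (T13 a c * T23 b c / (T a b c * T3 c))
          = Real.log (T13 a c) + Real.log (T23 b c) - Real.log (T a b c) - Real.log (T3 c) := by
        rw [Real.log_div (by positivity) (by positivity),
          Real.log_mul (ne_of_gt h13) (ne_of_gt h23),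
          Real.log_mul (ne_of_gt hTpos) (ne_of_gt h3)]
        ring
      have htval : t a b c = -(T a b c * Real.log (T13 a c * T23 b c / (T a b c * T3 c))) := by
        simp only [htdef]
        rw [hlogx]
        ring
      have hxpos : (0:ℝ) < T13 a c * T23 b c / (T a b c * T3 c) := by positivity
      have hx1 : T13 a c * T23 b c / (T a b c * T3 c) = 1 := by
        by_contra hne
        have hlt := Real.log_lt_sub_one_of_pos hxpos hne
        have hmul := mul_lt_mul_of_pos_left hlt hTpos
        have hgz' := hgz a b c
        rw [hgdef] at hgz'
        simp only at hgz'
        rw [htval, hqval] at hgz'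
        nlinarith [hmul]
      have := (div_eq_one_iff_eq (ne_of_gt (mul_pos hTpos h3))).1 hx1
      linarith [this]

  rw [hd13 a c, hd23 b c, hd3 c]
  exact key

lemma pre_snoc {𝒰 : Type*} {r : ℕ} (U : Fin r → Ω → 𝒰) {i : ℕ} (hi : i < r) (ω : Ω)
    (u : Fin i → 𝒰) (v : 𝒰) :
    pre U (i+1) hi ω = Fin.snoc u v ↔ pre U i (le_of_lt hi) ω = u ∧ U ⟨i, hi⟩ ω = v := by
  constructor
  · intro h
    refine ⟨funext fun k => ?_, ?_⟩
    · have h1 := congrFun h k.castSucc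
      rw [Fin.snoc_castSucc] at h1
      exact h1
    · have h2 := congrFun h (Fin.last i)
      rw [Fin.snoc_last] at h2
      exact h2
  · rintro ⟨h1, h2⟩
    funext k
    induction k using Fin.lastCases with
    | last =>
      rw [Fin.snoc_last]
      exact h2
    | cast k =>
      rw [Fin.snoc_castSucc]
      exact congrFun h1 k

/-- Joint distribution of `(X, Y, U^i)`. -/
def QQ {𝒰 : Type*} (p : Ω → ℝ) (X Y : Ω → Fin 2) {r : ℕ} (U : Fin r → Ω → 𝒰)
    (i : ℕ) (h : i ≤ r) (x y : Fin 2) (u : Fin i → 𝒰) : ℝ :=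
  dist' p (fun ω => ((X ω, Y ω), pre U i h ω)) ((x, y), u)

lemma QQ_eq {𝒰 : Type*} (p : Ω → ℝ) (X Y : Ω → Fin 2) {r : ℕ} (U : Fin r → Ω → 𝒰)
    (i : ℕ) (h : i ≤ r) (x y : Fin 2) (u : Fin i → 𝒰) :
    dist' p (fun ω => ((X ω, Y ω), pre U i h ω)) ((x, y), u) = QQ p X Y U i h x y u := rfl

set_option maxHeartbeats 1000000 in
/-- For binary symmetric sources with crossover `δ ∈ (0, 1/2)` and interactive `U^r`
satisfying (P1)-(P2), `I(X,Y ∧ U^r) ≥ min{H(X), H(Y)} = 1`. -/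
theorem stmt15 {Ω 𝒰 : Type*} [Fintype Ω] [Fintype 𝒰] {r : ℕ}
    (p : Ω → ℝ) (hp : IsPMF p) (X : Ω → Fin 2) (Y : Ω → Fin 2) (δ : ℝ)
    (hδ0 : 0 < δ) (hδ1 : δ < 1/2)
    (h00 : dist' p (fun ω => (X ω, Y ω)) (0, 0) = (1 - δ) / 2)
    (h11 : dist' p (fun ω => (X ω, Y ω)) (1, 1) = (1 - δ) / 2)
    (h01 : dist' p (fun ω => (X ω, Y ω)) (0, 1) = δ / 2)
    (h10 : dist' p (fun ω => (X ω, Y ω)) (1, 0) = δ / 2)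
    (U : Fin r → Ω → 𝒰)
    (h1 : P1cond p X Y U) (h2 : P2cond p X Y U) :
    mi p (fun ω => (X ω, Y ω)) (pre U r le_rfl) ≥ min (ent p X) (ent p Y) ∧
    min (ent p X) (ent p Y) = 1 := by
  classical
  have hδ1' : 0 < 1 - δ := by linarith
  -- basic nonnegativity
  have hQnn : ∀ (i : ℕ) (h : i ≤ r) (x y : Fin 2) (u : Fin i → 𝒰),
      0 ≤ QQ p X Y U i h x y u :=
    fun i h x y u => my_dist'_nonneg p hp.1 _ _
  -- prefix marginalization
  have hQpre : ∀ (i : ℕ) (hi : i < r) (x y : Fin 2) (u : Fin i → 𝒰),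
      ∑ v, QQ p X Y U (i+1) hi x y (Fin.snoc u v) = QQ p X Y U i (le_of_lt hi) x y u := by
    intro i hi x y u
    rw [show QQ p X Y U i (le_of_lt hi) x y u
        = ∑ v, dist' p (fun ω => (((X ω, Y ω), pre U i (le_of_lt hi) ω), U ⟨i, hi⟩ ω))
            (((x, y), u), v) from
      (my_marg_snd p (fun ω => ((X ω, Y ω), pre U i (le_of_lt hi) ω))
        (fun ω => U ⟨i, hi⟩ ω) ((x, y), u)).symm]
    refine Finset.sum_congr rfl fun v _ => my_dist'_congr p _ _ _ _ fun ω => ?_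
    simp only [Prod.ext_iff, pre_snoc U hi ω u v]
    tauto
  have hzero : ∀ (i : ℕ) (hi : i < r) (x y : Fin 2) (u : Fin i → 𝒰) (v : 𝒰),
      QQ p X Y U i (le_of_lt hi) x y u = 0 → QQ p X Y U (i+1) hi x y (Fin.snoc u v) = 0 := by
    intro i hi x y u v h0
    have hsum := hQpre i hi x y u
    rw [h0] at hsum
    exact (Finset.sum_eq_zero_iff_of_nonneg (fun v' _ => hQnn _ _ _ _ _)).1 hsum v
      (Finset.mem_univ v)
  -- the invariant
  have hInv : ∀ (i : ℕ) (h : i ≤ r) (u : Fin i → 𝒰),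
      QQ p X Y U i h 0 0 u * QQ p X Y U i h 1 1 u * δ^2
        = QQ p X Y U i h 0 1 u * QQ p X Y U i h 1 0 u * (1-δ)^2 := by
    intro i
    induction i with
    | zero =>
      intro h u
      have e : ∀ x y : Fin 2, QQ p X Y U 0 h x y u = dist' p (fun ω => (X ω, Y ω)) (x, y) := by
        intro x y
        refine my_dist'_congr p _ _ _ _ fun ω => ?_
        simp only [Prod.ext_iff]
        constructor
        · exact fun h' => h'.1
        · exact fun h' => ⟨h', funext fun k => k.elim0⟩
      rw [e 0 0, e 1 1, e 0 1, e 1 0, h00, h11, h01, h10]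
      ring
    | succ i ih =>
      intro h u
      have hi : i < r := h
      obtain ⟨u', v, rfl⟩ : ∃ (u' : Fin i → 𝒰) (v : 𝒰), u = Fin.snoc u' v :=
        ⟨Fin.init u, u (Fin.last i), (Fin.snoc_init_self u).symm⟩
      show QQ p X Y U (i+1) hi 0 0 (Fin.snoc u' v) * QQ p X Y U (i+1) hi 1 1 (Fin.snoc u' v) * δ^2
        = QQ p X Y U (i+1) hi 0 1 (Fin.snoc u' v) * QQ p X Y U (i+1) hi 1 0 (Fin.snoc u' v)
          * (1-δ)^2
      by_cases heven : Even i
      · -- terminal X speaks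
        have hcmi : cmi p (U ⟨i, hi⟩) Y (fun ω => (X ω, pre U i (le_of_lt hi) ω)) = 0 :=
          (h1 ⟨i, hi⟩).1 heven
        have hfac := factor_of_cmi_zero p hp (U ⟨i, hi⟩) Y
          (fun ω => (X ω, pre U i (le_of_lt hi) ω)) hcmi
        have hfacX : ∀ (x y : Fin 2),
            QQ p X Y U (i+1) hi x y (Fin.snoc u' v) * (∑ y', QQ p X Y U i (le_of_lt hi) x y' u')
              = (∑ y', QQ p X Y U (i+1) hi x y' (Fin.snoc u' v))
                * QQ p X Y U i (le_of_lt hi) x y u' := by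
          intro x y
          have c1 : dist' p (fun ω => ((U ⟨i, hi⟩ ω, Y ω), (X ω, pre U i (le_of_lt hi) ω)))
              ((v, y), (x, u')) = QQ p X Y U (i+1) hi x y (Fin.snoc u' v) := by
            refine my_dist'_congr p _ _ _ _ fun ω => ?_
            simp only [Prod.ext_iff, pre_snoc U hi ω u' v]
            tauto
          have c2 : dist' p (fun ω => (X ω, pre U i (le_of_lt hi) ω)) (x, u')
              = ∑ y', QQ p X Y U i (le_of_lt hi) x y' u' := by
            rw [show dist' p (fun ω => (X ω, pre U i (le_of_lt hi) ω)) (x, u')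
                = ∑ y', dist' p (fun ω => ((X ω, pre U i (le_of_lt hi) ω), Y ω)) ((x, u'), y') from
              (my_marg_snd p (fun ω => (X ω, pre U i (le_of_lt hi) ω)) Y (x, u')).symm]
            refine Finset.sum_congr rfl fun y' _ => my_dist'_congr p _ _ _ _ fun ω => ?_
            simp only [Prod.ext_iff]
            tauto
          have c3 : dist' p (fun ω => (U ⟨i, hi⟩ ω, (X ω, pre U i (le_of_lt hi) ω))) (v, (x, u'))
              = ∑ y', QQ p X Y U (i+1) hi x y' (Fin.snoc u' v) := by
            rw [show dist' p (fun ω => (U ⟨i, hi⟩ ω, (X ω, pre U i (le_of_lt hi) ω))) (v, (x, u'))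
                = ∑ y', dist' p (fun ω => ((U ⟨i, hi⟩ ω, (X ω, pre U i (le_of_lt hi) ω)), Y ω))
                  ((v, (x, u')), y') from
              (my_marg_snd p (fun ω => (U ⟨i, hi⟩ ω, (X ω, pre U i (le_of_lt hi) ω))) Y
                (v, (x, u'))).symm]
            refine Finset.sum_congr rfl fun y' _ => my_dist'_congr p _ _ _ _ fun ω => ?_
            simp only [Prod.ext_iff, pre_snoc U hi ω u' v]
            tauto
          have c4 : dist' p (fun ω => (Y ω, (X ω, pre U i (le_of_lt hi) ω))) (y, (x, u'))
              = QQ p X Y U i (le_of_lt hi) x y u' := by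
            refine my_dist'_congr p _ _ _ _ fun ω => ?_
            simp only [Prod.ext_iff]
            tauto
          have hf := hfac v y (x, u')
          rw [c1, c2, c3, c4] at hf
          exact hf
        have e1 := hfacX 0 0
        have e2 := hfacX 1 1
        have e3 := hfacX 0 1
        have e4 := hfacX 1 0
        set M0 := ∑ y', QQ p X Y U i (le_of_lt hi) 0 y' u' with hM0
        set M1 := ∑ y', QQ p X Y U i (le_of_lt hi) 1 y' u' with hM1
        set N0 := ∑ y', QQ p X Y U (i+1) hi 0 y' (Fin.snoc u' v) with hN0
        set N1 := ∑ y', QQ p X Y U (i+1) hi 1 y' (Fin.snoc u' v) with hN1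
        by_cases hM : M0 * M1 = 0
        · rcases mul_eq_zero.1 hM with h0 | h0
          · have hz : ∀ y : Fin 2, QQ p X Y U (i+1) hi 0 y (Fin.snoc u' v) = 0 := by
              intro y
              refine hzero i hi 0 y u' v ?_
              exact (Finset.sum_eq_zero_iff_of_nonneg (fun _ _ => hQnn _ _ _ _ _)).1 h0 y
                (Finset.mem_univ y)
            rw [hz 0, hz 1]
            ring
          · have hz : ∀ y : Fin 2, QQ p X Y U (i+1) hi 1 y (Fin.snoc u' v) = 0 := by
              intro y
              refine hzero i hi 1 y u' v ?_
              exact (Finset.sum_eq_zero_iff_of_nonneg (fun _ _ => hQnn _ _ _ _ _)).1 h0 y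
                (Finset.mem_univ y)
            rw [hz 1, hz 0]
            ring
        · apply mul_right_cancel₀ hM
          calc QQ p X Y U (i+1) hi 0 0 (Fin.snoc u' v) * QQ p X Y U (i+1) hi 1 1 (Fin.snoc u' v)
                * δ^2 * (M0 * M1)
              = (QQ p X Y U (i+1) hi 0 0 (Fin.snoc u' v) * M0)
                * (QQ p X Y U (i+1) hi 1 1 (Fin.snoc u' v) * M1) * δ^2 := by ring
            _ = (N0 * QQ p X Y U i (le_of_lt hi) 0 0 u')
                * (N1 * QQ p X Y U i (le_of_lt hi) 1 1 u') * δ^2 := by rw [e1, e2]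
            _ = (N0 * N1) * (QQ p X Y U i (le_of_lt hi) 0 0 u'
                * QQ p X Y U i (le_of_lt hi) 1 1 u' * δ^2) := by ring
            _ = (N0 * N1) * (QQ p X Y U i (le_of_lt hi) 0 1 u'
                * QQ p X Y U i (le_of_lt hi) 1 0 u' * (1-δ)^2) := by rw [ih (le_of_lt hi) u']
            _ = (N0 * QQ p X Y U i (le_of_lt hi) 0 1 u')
                * (N1 * QQ p X Y U i (le_of_lt hi) 1 0 u') * (1-δ)^2 := by ring
            _ = (QQ p X Y U (i+1) hi 0 1 (Fin.snoc u' v) * M0)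
                * (QQ p X Y U (i+1) hi 1 0 (Fin.snoc u' v) * M1) * (1-δ)^2 := by rw [← e3, ← e4]
            _ = QQ p X Y U (i+1) hi 0 1 (Fin.snoc u' v) * QQ p X Y U (i+1) hi 1 0 (Fin.snoc u' v)
                * (1-δ)^2 * (M0 * M1) := by ring
      · -- terminal Y speaks
        have hcmi : cmi p (U ⟨i, hi⟩) X (fun ω => (Y ω, pre U i (le_of_lt hi) ω)) = 0 :=
          (h1 ⟨i, hi⟩).2 heven
        have hfac := factor_of_cmi_zero p hp (U ⟨i, hi⟩) X
          (fun ω => (Y ω, pre U i (le_of_lt hi) ω)) hcmi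
        have hfacY : ∀ (x y : Fin 2),
            QQ p X Y U (i+1) hi x y (Fin.snoc u' v) * (∑ x', QQ p X Y U i (le_of_lt hi) x' y u')
              = (∑ x', QQ p X Y U (i+1) hi x' y (Fin.snoc u' v))
                * QQ p X Y U i (le_of_lt hi) x y u' := by
          intro x y
          have c1 : dist' p (fun ω => ((U ⟨i, hi⟩ ω, X ω), (Y ω, pre U i (le_of_lt hi) ω)))
              ((v, x), (y, u')) = QQ p X Y U (i+1) hi x y (Fin.snoc u' v) := by
            refine my_dist'_congr p _ _ _ _ fun ω => ?_
            simp only [Prod.ext_iff, pre_snoc U hi ω u' v]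
            tauto
          have c2 : dist' p (fun ω => (Y ω, pre U i (le_of_lt hi) ω)) (y, u')
              = ∑ x', QQ p X Y U i (le_of_lt hi) x' y u' := by
            rw [show dist' p (fun ω => (Y ω, pre U i (le_of_lt hi) ω)) (y, u')
                = ∑ x', dist' p (fun ω => ((Y ω, pre U i (le_of_lt hi) ω), X ω)) ((y, u'), x') from
              (my_marg_snd p (fun ω => (Y ω, pre U i (le_of_lt hi) ω)) X (y, u')).symm]
            refine Finset.sum_congr rfl fun x' _ => my_dist'_congr p _ _ _ _ fun ω => ?_
            simp only [Prod.ext_iff]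
            tauto
          have c3 : dist' p (fun ω => (U ⟨i, hi⟩ ω, (Y ω, pre U i (le_of_lt hi) ω))) (v, (y, u'))
              = ∑ x', QQ p X Y U (i+1) hi x' y (Fin.snoc u' v) := by
            rw [show dist' p (fun ω => (U ⟨i, hi⟩ ω, (Y ω, pre U i (le_of_lt hi) ω))) (v, (y, u'))
                = ∑ x', dist' p (fun ω => ((U ⟨i, hi⟩ ω, (Y ω, pre U i (le_of_lt hi) ω)), X ω))
                  ((v, (y, u')), x') from
              (my_marg_snd p (fun ω => (U ⟨i, hi⟩ ω, (Y ω, pre U i (le_of_lt hi) ω))) X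
                (v, (y, u'))).symm]
            refine Finset.sum_congr rfl fun x' _ => my_dist'_congr p _ _ _ _ fun ω => ?_
            simp only [Prod.ext_iff, pre_snoc U hi ω u' v]
            tauto
          have c4 : dist' p (fun ω => (X ω, (Y ω, pre U i (le_of_lt hi) ω))) (x, (y, u'))
              = QQ p X Y U i (le_of_lt hi) x y u' := by
            refine my_dist'_congr p _ _ _ _ fun ω => ?_
            simp only [Prod.ext_iff]
            tauto
          have hf := hfac v x (y, u')
          rw [c1, c2, c3, c4] at hf
          exact hf
        have e1 := hfacY 0 0
        have e2 := hfacY 1 1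
        have e3 := hfacY 0 1
        have e4 := hfacY 1 0
        set M0 := ∑ x', QQ p X Y U i (le_of_lt hi) x' 0 u' with hM0
        set M1 := ∑ x', QQ p X Y U i (le_of_lt hi) x' 1 u' with hM1
        set N0 := ∑ x', QQ p X Y U (i+1) hi x' 0 (Fin.snoc u' v) with hN0
        set N1 := ∑ x', QQ p X Y U (i+1) hi x' 1 (Fin.snoc u' v) with hN1
        by_cases hM : M0 * M1 = 0
        · rcases mul_eq_zero.1 hM with h0 | h0
          · have hz : ∀ x : Fin 2, QQ p X Y U (i+1) hi x 0 (Fin.snoc u' v) = 0 := by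
              intro x
              refine hzero i hi x 0 u' v ?_
              exact (Finset.sum_eq_zero_iff_of_nonneg (fun _ _ => hQnn _ _ _ _ _)).1 h0 x
                (Finset.mem_univ x)
            rw [hz 0, hz 1]
            ring
          · have hz : ∀ x : Fin 2, QQ p X Y U (i+1) hi x 1 (Fin.snoc u' v) = 0 := by
              intro x
              refine hzero i hi x 1 u' v ?_
              exact (Finset.sum_eq_zero_iff_of_nonneg (fun _ _ => hQnn _ _ _ _ _)).1 h0 x
                (Finset.mem_univ x)
            rw [hz 1, hz 0]
            ring
        · apply mul_right_cancel₀ hM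
          calc QQ p X Y U (i+1) hi 0 0 (Fin.snoc u' v) * QQ p X Y U (i+1) hi 1 1 (Fin.snoc u' v)
                * δ^2 * (M0 * M1)
              = (QQ p X Y U (i+1) hi 0 0 (Fin.snoc u' v) * M0)
                * (QQ p X Y U (i+1) hi 1 1 (Fin.snoc u' v) * M1) * δ^2 := by ring
            _ = (N0 * QQ p X Y U i (le_of_lt hi) 0 0 u')
                * (N1 * QQ p X Y U i (le_of_lt hi) 1 1 u') * δ^2 := by rw [e1, e2]
            _ = (N0 * N1) * (QQ p X Y U i (le_of_lt hi) 0 0 u'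
                * QQ p X Y U i (le_of_lt hi) 1 1 u' * δ^2) := by ring
            _ = (N0 * N1) * (QQ p X Y U i (le_of_lt hi) 0 1 u'
                * QQ p X Y U i (le_of_lt hi) 1 0 u' * (1-δ)^2) := by rw [ih (le_of_lt hi) u']
            _ = (N1 * QQ p X Y U i (le_of_lt hi) 0 1 u')
                * (N0 * QQ p X Y U i (le_of_lt hi) 1 0 u') * (1-δ)^2 := by ring
            _ = (QQ p X Y U (i+1) hi 0 1 (Fin.snoc u' v) * M1)
                * (QQ p X Y U (i+1) hi 1 0 (Fin.snoc u' v) * M0) * (1-δ)^2 := by rw [← e3, ← e4]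
            _ = QQ p X Y U (i+1) hi 0 1 (Fin.snoc u' v) * QQ p X Y U (i+1) hi 1 0 (Fin.snoc u' v)
                * (1-δ)^2 * (M0 * M1) := by ring
  -- conditional independence given the full transcript
  have hP2 := factor_of_cmi_zero p hp X Y (pre U r le_rfl) h2
  have cX : ∀ (x : Fin 2) (u : Fin r → 𝒰), dist' p (fun ω => (X ω, pre U r le_rfl ω)) (x, u)
      = ∑ y, QQ p X Y U r le_rfl x y u := by
    intro x u
    rw [show dist' p (fun ω => (X ω, pre U r le_rfl ω)) (x, u)
        = ∑ y, dist' p (fun ω => ((X ω, pre U r le_rfl ω), Y ω)) ((x, u), y) from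
      (my_marg_snd p (fun ω => (X ω, pre U r le_rfl ω)) Y (x, u)).symm]
    refine Finset.sum_congr rfl fun y _ => my_dist'_congr p _ _ _ _ fun ω => ?_
    simp only [Prod.ext_iff]
    tauto
  have cY : ∀ (y : Fin 2) (u : Fin r → 𝒰), dist' p (fun ω => (Y ω, pre U r le_rfl ω)) (y, u)
      = ∑ x, QQ p X Y U r le_rfl x y u := by
    intro y u
    rw [show dist' p (fun ω => (Y ω, pre U r le_rfl ω)) (y, u)
        = ∑ x, dist' p (fun ω => ((Y ω, pre U r le_rfl ω), X ω)) ((y, u), x) from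
      (my_marg_snd p (fun ω => (Y ω, pre U r le_rfl ω)) X (y, u)).symm]
    refine Finset.sum_congr rfl fun x _ => my_dist'_congr p _ _ _ _ fun ω => ?_
    simp only [Prod.ext_iff]
    tauto
  have cP : ∀ u : Fin r → 𝒰, dist' p (pre U r le_rfl) u
      = ∑ x, ∑ y, QQ p X Y U r le_rfl x y u := by
    intro u
    rw [show dist' p (pre U r le_rfl) u
        = ∑ xy : Fin 2 × Fin 2, dist' p (fun ω => ((X ω, Y ω), pre U r le_rfl ω)) (xy, u) from
      (my_marg_fst p (fun ω => (X ω, Y ω)) (pre U r le_rfl) u).symm]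
    rw [Fintype.sum_prod_type]
    rfl
  have hfacP : ∀ (x y : Fin 2) (u : Fin r → 𝒰),
      QQ p X Y U r le_rfl x y u * (∑ x', ∑ y', QQ p X Y U r le_rfl x' y' u)
        = (∑ y', QQ p X Y U r le_rfl x y' u) * (∑ x', QQ p X Y U r le_rfl x' y u) := by
    intro x y u
    have hf := hP2 x y u
    rw [cX, cY, cP] at hf
    exact hf
  -- each transcript value makes X or Y deterministic
  have hdiag : ∀ u : Fin r → 𝒰,
      QQ p X Y U r le_rfl 0 0 u * QQ p X Y U r le_rfl 1 1 u = 0 ∧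
      QQ p X Y U r le_rfl 0 1 u * QQ p X Y U r le_rfl 1 0 u = 0 := by
    intro u
    by_cases hP0 : (∑ x, ∑ y, QQ p X Y U r le_rfl x y u) = 0
    · have hz : ∀ x y : Fin 2, QQ p X Y U r le_rfl x y u = 0 := by
        intro x y
        have h' := (Finset.sum_eq_zero_iff_of_nonneg
          (fun x' _ => Finset.sum_nonneg fun y' _ => hQnn _ _ _ _ _)).1 hP0 x (Finset.mem_univ x)
        exact (Finset.sum_eq_zero_iff_of_nonneg (fun y' _ => hQnn _ _ _ _ _)).1 h' y
          (Finset.mem_univ y)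
      constructor <;> rw [hz, hz] <;> ring
    · have hPP : (∑ x, ∑ y, QQ p X Y U r le_rfl x y u)
          * (∑ x, ∑ y, QQ p X Y U r le_rfl x y u) ≠ 0 := mul_ne_zero hP0 hP0
      have key : (QQ p X Y U r le_rfl 0 0 u * QQ p X Y U r le_rfl 1 1 u)
            * ((∑ x, ∑ y, QQ p X Y U r le_rfl x y u) * (∑ x, ∑ y, QQ p X Y U r le_rfl x y u))
          = (QQ p X Y U r le_rfl 0 1 u * QQ p X Y U r le_rfl 1 0 u)
            * ((∑ x, ∑ y, QQ p X Y U r le_rfl x y u)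
              * (∑ x, ∑ y, QQ p X Y U r le_rfl x y u)) := by
        have f00 := hfacP 0 0 u
        have f11 := hfacP 1 1 u
        have f01 := hfacP 0 1 u
        have f10 := hfacP 1 0 u
        calc (QQ p X Y U r le_rfl 0 0 u * QQ p X Y U r le_rfl 1 1 u)
              * ((∑ x, ∑ y, QQ p X Y U r le_rfl x y u) * (∑ x, ∑ y, QQ p X Y U r le_rfl x y u))
            = (QQ p X Y U r le_rfl 0 0 u * (∑ x', ∑ y', QQ p X Y U r le_rfl x' y' u))
              * (QQ p X Y U r le_rfl 1 1 u * (∑ x', ∑ y', QQ p X Y U r le_rfl x' y' u)) := by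
              ring
          _ = ((∑ y', QQ p X Y U r le_rfl 0 y' u) * (∑ x', QQ p X Y U r le_rfl x' 0 u))
              * ((∑ y', QQ p X Y U r le_rfl 1 y' u) * (∑ x', QQ p X Y U r le_rfl x' 1 u)) := by
              rw [f00, f11]
          _ = ((∑ y', QQ p X Y U r le_rfl 0 y' u) * (∑ x', QQ p X Y U r le_rfl x' 1 u))
              * ((∑ y', QQ p X Y U r le_rfl 1 y' u) * (∑ x', QQ p X Y U r le_rfl x' 0 u)) := by
              ring
          _ = (QQ p X Y U r le_rfl 0 1 u * (∑ x', ∑ y', QQ p X Y U r le_rfl x' y' u))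
              * (QQ p X Y U r le_rfl 1 0 u * (∑ x', ∑ y', QQ p X Y U r le_rfl x' y' u)) := by
              rw [← f01, ← f10]
          _ = (QQ p X Y U r le_rfl 0 1 u * QQ p X Y U r le_rfl 1 0 u)
              * ((∑ x, ∑ y, QQ p X Y U r le_rfl x y u)
                * (∑ x, ∑ y, QQ p X Y U r le_rfl x y u)) := by ring
      have hm : QQ p X Y U r le_rfl 0 0 u * QQ p X Y U r le_rfl 1 1 u
          = QQ p X Y U r le_rfl 0 1 u * QQ p X Y U r le_rfl 1 0 u :=
        mul_right_cancel₀ hPP key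
      have hinv := hInv r le_rfl u
      have hlt : δ^2 < (1-δ)^2 := by nlinarith
      have hm0 : QQ p X Y U r le_rfl 0 0 u * QQ p X Y U r le_rfl 1 1 u = 0 := by
        have hd : (QQ p X Y U r le_rfl 0 0 u * QQ p X Y U r le_rfl 1 1 u)
            * (δ^2 - (1-δ)^2) = 0 := by
          linear_combination hinv - (1-δ)^2 * hm
        rcases mul_eq_zero.1 hd with h' | h'
        · exact h'
        · exact absurd (by linarith : δ^2 = (1-δ)^2) (ne_of_lt hlt)
      refine ⟨hm0, ?_⟩
      rw [← hm]
      exact hm0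
  -- entropy computations
  have hann : ∀ u : Fin r → 𝒰, 0 ≤ QQ p X Y U r le_rfl 0 0 u + QQ p X Y U r le_rfl 1 1 u :=
    fun u => add_nonneg (hQnn _ _ _ _ _) (hQnn _ _ _ _ _)
  have hbnn : ∀ u : Fin r → 𝒰, 0 ≤ QQ p X Y U r le_rfl 0 1 u + QQ p X Y U r le_rfl 1 0 u :=
    fun u => add_nonneg (hQnn _ _ _ _ _) (hQnn _ _ _ _ _)
  have eJoint : ent p (fun ω => ((X ω, Y ω), pre U r le_rfl ω))
      = ∑ u, (nml (QQ p X Y U r le_rfl 0 0 u + QQ p X Y U r le_rfl 1 1 u)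
          + nml (QQ p X Y U r le_rfl 0 1 u + QQ p X Y U r le_rfl 1 0 u)) := by
    rw [my_ent_eq, Fintype.sum_prod_type, Finset.sum_comm]
    refine Finset.sum_congr rfl fun u _ => ?_
    rw [Fintype.sum_prod_type, Fin.sum_univ_two, Fin.sum_univ_two, Fin.sum_univ_two]
    simp only [QQ_eq]
    rw [← nml_add_of_mul_eq_zero (hdiag u).1, ← nml_add_of_mul_eq_zero (hdiag u).2]
    ring
  have eU : ent p (pre U r le_rfl)
      = ∑ u, nml ((QQ p X Y U r le_rfl 0 0 u + QQ p X Y U r le_rfl 1 1 u)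
          + (QQ p X Y U r le_rfl 0 1 u + QQ p X Y U r le_rfl 1 0 u)) := by
    rw [my_ent_eq]
    refine Finset.sum_congr rfl fun u _ => ?_
    rw [cP u, Fin.sum_univ_two, Fin.sum_univ_two, Fin.sum_univ_two]
    congr 1
    ring
  have eXY : ent p (fun ω => (X ω, Y ω)) = 1 + (nml δ + nml (1 - δ)) := by
    rw [my_ent_eq, Fintype.sum_prod_type, Fin.sum_univ_two, Fin.sum_univ_two, Fin.sum_univ_two,
      h00, h01, h10, h11, nml_half_mul δ hδ0, nml_half_mul (1-δ) hδ1']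
    ring
  have sA : ∑ u, (QQ p X Y U r le_rfl 0 0 u + QQ p X Y U r le_rfl 1 1 u) = 1 - δ := by
    rw [Finset.sum_add_distrib]
    have s1 : ∑ u, QQ p X Y U r le_rfl 0 0 u = (1 - δ) / 2 := by
      rw [← h00]
      exact my_marg_snd p (fun ω => (X ω, Y ω)) (pre U r le_rfl) (0, 0)
    have s2 : ∑ u, QQ p X Y U r le_rfl 1 1 u = (1 - δ) / 2 := by
      rw [← h11]
      exact my_marg_snd p (fun ω => (X ω, Y ω)) (pre U r le_rfl) (1, 1)
    rw [s1, s2]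
    ring
  have sB : ∑ u, (QQ p X Y U r le_rfl 0 1 u + QQ p X Y U r le_rfl 1 0 u) = δ := by
    rw [Finset.sum_add_distrib]
    have s1 : ∑ u, QQ p X Y U r le_rfl 0 1 u = δ / 2 := by
      rw [← h01]
      exact my_marg_snd p (fun ω => (X ω, Y ω)) (pre U r le_rfl) (0, 1)
    have s2 : ∑ u, QQ p X Y U r le_rfl 1 0 u = δ / 2 := by
      rw [← h10]
      exact my_marg_snd p (fun ω => (X ω, Y ω)) (pre U r le_rfl) (1, 0)
    rw [s1, s2]
    ring
  have hkey := my_superadd (fun u => QQ p X Y U r le_rfl 0 0 u + QQ p X Y U r le_rfl 1 1 u)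
    (fun u => QQ p X Y U r le_rfl 0 1 u + QQ p X Y U r le_rfl 1 0 u) hann hbnn
  rw [sA, sB] at hkey
  rw [show (1 - δ) + δ = 1 from by ring, nml_one] at hkey
  rw [Finset.sum_sub_distrib, Finset.sum_add_distrib] at hkey
  -- marginal entropies
  have hX0 : dist' p X 0 = 1 / 2 := by
    rw [show dist' p X 0 = ∑ y, dist' p (fun ω => (X ω, Y ω)) ((0 : Fin 2), y) from
      (my_marg_snd p X Y 0).symm, Fin.sum_univ_two, h00, h01]
    ring
  have hX1 : dist' p X 1 = 1 / 2 := by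
    rw [show dist' p X 1 = ∑ y, dist' p (fun ω => (X ω, Y ω)) ((1 : Fin 2), y) from
      (my_marg_snd p X Y 1).symm, Fin.sum_univ_two, h10, h11]
    ring
  have hY0 : dist' p Y 0 = 1 / 2 := by
    rw [show dist' p Y 0 = ∑ x, dist' p (fun ω => (X ω, Y ω)) (x, (0 : Fin 2)) from
      (my_marg_fst p X Y 0).symm, Fin.sum_univ_two, h00, h10]
    ring
  have hY1 : dist' p Y 1 = 1 / 2 := by
    rw [show dist' p Y 1 = ∑ x, dist' p (fun ω => (X ω, Y ω)) (x, (1 : Fin 2)) from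
      (my_marg_fst p X Y 1).symm, Fin.sum_univ_two, h01, h11]
    ring
  have hentX : ent p X = 1 := by
    rw [my_ent_eq, Fin.sum_univ_two, hX0, hX1, nml_half]
    norm_num
  have hentY : ent p Y = 1 := by
    rw [my_ent_eq, Fin.sum_univ_two, hY0, hY1, nml_half]
    norm_num
  have hmin : min (ent p X) (ent p Y) = 1 := by
    rw [hentX, hentY, min_self]
  refine ⟨?_, hmin⟩
  rw [hmin]
  simp only [mi]
  rw [eXY, eU, eJoint, Finset.sum_add_distrib]
  linarith
end
end
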